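/- arXiv:1712.04677 — 5 statements merged into one kernel-verified Lean document; each statement's English description precedes it below -/
import Mathlib

section
/- Assume {p ∈ Δ_N : sᵀp = S} is nonempty and let ν > 0. Then G_ν is well defined, convex, and continuously differentiable at every λ ∈ ℝ^M, its gradient is ∇G_ν(λ) = Wᵀ p_ν(λ) where p_ν(λ) is the unique maximizer defining G_ν(λ), and ∇G_ν is Lipschitz continuous with Lipschitz constant 1/ν with respect to the Euclidean norm. -/
open Real Finset in
lemma aux_log_lb {a b : ℝ} (hb : 0 < b) (hba : b ≤ a) :
    2 * (a - b) / (a + b) ≤ Real.log a - Real.log b := by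
  set g : ℝ → ℝ := fun x => Real.log x - 2 * (x - b) / (x + b) with hg
  have hder : ∀ x ∈ Set.Ioi b, HasDerivAt g (x⁻¹ - 4 * b / (x + b) ^ 2) x := by
    intro x hx
    have hx0 : (0 : ℝ) < x := lt_trans hb hx
    have hxb : x + b ≠ 0 := by positivity
    have h1 : HasDerivAt (fun x : ℝ => Real.log x) x⁻¹ x := Real.hasDerivAt_log hx0.ne'
    have h2 : HasDerivAt (fun x : ℝ => 2 * (x - b) / (x + b))
        ((2 * 1 * (x + b) - 2 * (x - b) * 1) / (x + b) ^ 2) x :=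
      (((hasDerivAt_id x).sub_const b).const_mul 2).div ((hasDerivAt_id x).add_const b) hxb
    have h3 := h1.sub h2
    rw [show (2 * 1 * (x + b) - 2 * (x - b) * 1) = 4 * b by ring] at h3
    exact h3
  have hcont : ContinuousOn g (Set.Ici b) := by
    apply ContinuousOn.sub
    · exact Real.continuousOn_log.mono fun x hx => by
        simp only [Set.mem_compl_iff, Set.mem_singleton_iff]
        exact ne_of_gt (lt_of_lt_of_le hb hx)
    · apply ContinuousOn.div
      · fun_prop
      · fun_prop
      · intro x hx
        have hbx : b ≤ x := hx
        exact ne_of_gt (by linarith)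
  have hmono : MonotoneOn g (Set.Ici b) := by
    apply monotoneOn_of_deriv_nonneg (convex_Ici b) hcont
    · intro x hx
      rw [interior_Ici] at hx
      exact (hder x hx).differentiableAt.differentiableWithinAt
    · intro x hx
      rw [interior_Ici] at hx
      rw [(hder x hx).deriv]
      have hx0 : (0 : ℝ) < x := lt_trans hb hx
      have h4 : x⁻¹ - 4 * b / (x + b) ^ 2 = (x - b) ^ 2 / (x * (x + b) ^ 2) := by
        field_simp
        ring
      rw [h4]
      positivity
  have h5 := hmono (Set.self_mem_Ici) (Set.mem_Ici.2 hba) hba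
  have h6 : g b = Real.log b := by simp [hg]
  rw [h6] at h5
  simp only [hg] at h5
  linarith

open Real Finset in
set_option maxHeartbeats 1000000 in
lemma aux_strong_concave {N : ℕ} (x y : Fin N → ℝ)
    (hx : x ∈ stdSimplex ℝ (Fin N)) (hy : y ∈ stdSimplex ℝ (Fin N))
    {t : ℝ} (ht0 : 0 ≤ t) (ht1 : t ≤ 1) :
    (1 - t) * (∑ i, Real.negMulLog (x i)) + t * (∑ i, Real.negMulLog (y i)) +
      t * (1 - t) / 2 * (∑ i, |y i - x i|) ^ 2
      ≤ ∑ i, Real.negMulLog ((1 - t) * x i + t * y i) := by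
  classical
  set u : Fin N → ℝ := fun i => y i - x i with hu
  set c : ℝ := (∑ i, |u i|) ^ 2 with hc
  set f : ℝ → ℝ := fun τ => (∑ i, Real.negMulLog (x i + τ * u i)) + c / 2 * τ ^ 2 with hf
  have hxn : ∀ i, 0 ≤ x i := hx.1
  have hyn : ∀ i, 0 ≤ y i := hy.1
  have hxs : ∑ i, x i = 1 := hx.2
  have hys : ∑ i, y i = 1 := hy.2
  have hus : ∑ i, u i = 0 := by
    simp only [hu]
    rw [Finset.sum_sub_distrib, hxs, hys]
    ring
  -- positivity of coordinates on the open interval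
  have hpos : ∀ τ, 0 < τ → τ < 1 → ∀ i, u i ≠ 0 → 0 < x i + τ * u i := by
    intro τ h0 h1 i hui
    rw [show u i = y i - x i from rfl] at hui ⊢
    rcases (hxn i).lt_or_eq with h | h
    · nlinarith [hyn i]
    · have hyi : 0 < y i := by
        rcases (hyn i).lt_or_eq with h' | h'
        · exact h'
        · exfalso; apply hui; rw [← h, ← h']; ring
      nlinarith
  have hmn : ∀ τ, 0 < τ → τ < 1 → ∀ i, 0 ≤ x i + τ * u i := by
    intro τ h0 h1 i
    rw [show u i = y i - x i from rfl]
    nlinarith [hxn i, hyn i]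
  -- derivative formula
  set D1 : ℝ → ℝ := fun τ =>
    (∑ i, if u i = 0 then 0 else (-Real.log (x i + τ * u i) - 1) * u i) + c * τ with hD1
  have hderiv : ∀ τ, 0 < τ → τ < 1 → HasDerivAt f (D1 τ) τ := by
    intro τ h0 h1
    apply HasDerivAt.add
    · apply HasDerivAt.fun_sum
      intro i _
      by_cases h : u i = 0
      · simp only [h, if_pos, mul_zero]
        exact hasDerivAt_const τ _
      · rw [if_neg h]
        have harg : HasDerivAt (fun τ : ℝ => x i + τ * u i) (u i) τ := by
          simpa using ((hasDerivAt_id τ).mul_const (u i)).const_add (x i)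
        exact (Real.hasDerivAt_negMulLog (ne_of_gt (hpos τ h0 h1 i h))).comp τ harg
    · have : HasDerivAt (fun τ : ℝ => c / 2 * τ ^ 2) (c / 2 * (2 * τ)) τ := by
        simpa using (hasDerivAt_pow 2 τ).const_mul (c / 2)
      exact this.congr_deriv (by ring)
  -- D1 is antitone
  have hanti : ∀ σ τ, 0 < σ → σ < 1 → 0 < τ → τ < 1 → σ ≤ τ → D1 τ ≤ D1 σ := by
    intro σ τ hσ0 hσ1 hτ0 hτ1 hστ
    set δ : ℝ := τ - σ with hδ
    have hδ0 : 0 ≤ δ := by simp [hδ]; linarith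
    set w : Fin N → ℝ := fun i => (x i + σ * u i) + (x i + τ * u i) with hw
    have hwn : ∀ i, 0 ≤ w i := fun i => add_nonneg (hmn σ hσ0 hσ1 i) (hmn τ hτ0 hτ1 i)
    have hws : ∑ i, w i = 2 := by
      simp only [hw]
      rw [Finset.sum_add_distrib, Finset.sum_add_distrib, Finset.sum_add_distrib,
        ← Finset.mul_sum, ← Finset.mul_sum, hxs, hus]
      ring
    have Hterm : ∀ i, (if u i = 0 then 0 else (-Real.log (x i + τ * u i) - 1) * u i)
        ≤ (if u i = 0 then 0 else (-Real.log (x i + σ * u i) - 1) * u i)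
          - 2 * δ * (u i) ^ 2 / w i := by
      intro i
      by_cases h : u i = 0
      · simp [h]
      · rw [if_neg h, if_neg h]
        have hms : 0 < x i + σ * u i := hpos σ hσ0 hσ1 i h
        have hmt : 0 < x i + τ * u i := hpos τ hτ0 hτ1 i h
        have hwi : 0 < w i := by simp only [hw]; linarith
        have hkey : 2 * δ * (u i) ^ 2 / w i
            ≤ u i * Real.log (x i + τ * u i) - u i * Real.log (x i + σ * u i) := by
          rcases lt_or_gt_of_ne h with hneg | hpos'
          · -- u i < 0 : m_τ ≤ m_σ
            have hle : x i + τ * u i ≤ x i + σ * u i := by nlinarith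
            have hlog := aux_log_lb hmt hle
            have hmul := mul_le_mul_of_nonneg_left hlog (by linarith : (0:ℝ) ≤ -u i)
            have e1 : -u i * (2 * ((x i + σ * u i) - (x i + τ * u i)) /
                ((x i + σ * u i) + (x i + τ * u i))) = 2 * δ * (u i) ^ 2 / w i := by
              rw [hw]; field_simp; ring
            have e2 : -u i * (Real.log (x i + σ * u i) - Real.log (x i + τ * u i))
                = u i * Real.log (x i + τ * u i) - u i * Real.log (x i + σ * u i) := by ring
            rw [e1, e2] at hmul
            exact hmul
          · -- u i > 0 : m_σ ≤ m_τ
            have hle : x i + σ * u i ≤ x i + τ * u i := by nlinarith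
            have hlog := aux_log_lb hms hle
            have hmul := mul_le_mul_of_nonneg_left hlog (le_of_lt hpos')
            have e1 : u i * (2 * ((x i + τ * u i) - (x i + σ * u i)) /
                ((x i + τ * u i) + (x i + σ * u i))) = 2 * δ * (u i) ^ 2 / w i := by
              rw [hw]; field_simp; ring
            have e2 : u i * (Real.log (x i + τ * u i) - Real.log (x i + σ * u i))
                = u i * Real.log (x i + τ * u i) - u i * Real.log (x i + σ * u i) := by ring
            rw [e1, e2] at hmul
            exact hmul
        nlinarith [hkey]
    -- Cauchy-Schwarz
    have hCS : c ≤ 2 * ∑ i, (u i) ^ 2 / w i := by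
      have h1 : ∑ i, Real.sqrt (w i) * (if u i = 0 then 0 else |u i| / Real.sqrt (w i))
          = ∑ i, |u i| := by
        apply Finset.sum_congr rfl
        intro i _
        by_cases h : u i = 0
        · simp [h]
        · rw [if_neg h]
          have hwi : 0 < w i := by
            have := hpos σ hσ0 hσ1 i h
            have := hpos τ hτ0 hτ1 i h
            simp only [hw]; linarith
          rw [mul_div_cancel₀ _ (ne_of_gt (Real.sqrt_pos.2 hwi))]
      have h2 : ∑ i, Real.sqrt (w i) ^ 2 = 2 := by
        rw [← hws]
        exact Finset.sum_congr rfl fun i _ => Real.sq_sqrt (hwn i)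
      have h3 : ∑ i, (if u i = 0 then 0 else |u i| / Real.sqrt (w i)) ^ 2
          = ∑ i, (u i) ^ 2 / w i := by
        apply Finset.sum_congr rfl
        intro i _
        by_cases h : u i = 0
        · simp [h]
        · rw [if_neg h]
          have hwi : 0 < w i := by
            have := hpos σ hσ0 hσ1 i h
            have := hpos τ hτ0 hτ1 i h
            simp only [hw]; linarith
          rw [div_pow, sq_abs, Real.sq_sqrt (hwn i)]
      have := Finset.sum_mul_sq_le_sq_mul_sq Finset.univ
        (fun i => Real.sqrt (w i)) (fun i => if u i = 0 then 0 else |u i| / Real.sqrt (w i))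
      rw [h1, h2, h3] at this
      simpa [hc] using this
    have hsum := Finset.sum_le_sum (s := Finset.univ) fun i _ => Hterm i
    rw [Finset.sum_sub_distrib] at hsum
    have hdivsum : ∑ i, 2 * δ * (u i) ^ 2 / w i = 2 * δ * ∑ i, (u i) ^ 2 / w i := by
      rw [Finset.mul_sum]
      exact Finset.sum_congr rfl fun i _ => by rw [mul_div_assoc]
    rw [hdivsum] at hsum
    simp only [hD1]
    nlinarith [hsum, hCS]
  -- concavity
  have hcont : Continuous f := by
    apply Continuous.add
    · exact continuous_finset_sum _ fun i _ =>
        Real.continuous_negMulLog.comp (by fun_prop)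
    · fun_prop
  have hcc : ConcaveOn ℝ (Set.Icc (0:ℝ) 1) f := by
    apply AntitoneOn.concaveOn_of_deriv (convex_Icc 0 1) hcont.continuousOn
    · intro τ hτ
      rw [interior_Icc] at hτ
      exact (hderiv τ hτ.1 hτ.2).differentiableAt.differentiableWithinAt
    · intro σ hσ τ hτ hστ
      rw [interior_Icc] at hσ hτ
      rw [(hderiv σ hσ.1 hσ.2).deriv, (hderiv τ hτ.1 hτ.2).deriv]
      exact hanti σ τ hσ.1 hσ.2 hτ.1 hτ.2 hστ
  have happ := hcc.2 (Set.left_mem_Icc.2 (by norm_num)) (Set.right_mem_Icc.2 (by norm_num))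
    (by linarith : (0:ℝ) ≤ 1 - t) ht0 (by ring)
  simp only [smul_eq_mul, mul_zero, mul_one, zero_add] at happ
  have hf0 : f 0 = ∑ i, Real.negMulLog (x i) := by simp [hf]
  have hf1 : f 1 = (∑ i, Real.negMulLog (y i)) + c / 2 := by
    simp only [hf, one_pow, mul_one, one_mul]
    congr 1
    exact Finset.sum_congr rfl fun i _ => by rw [show x i + u i = y i by simp [hu]]
  have hft : f t = (∑ i, Real.negMulLog ((1 - t) * x i + t * y i)) + c / 2 * t ^ 2 := by
    simp only [hf]
    congr 1
    exact Finset.sum_congr rfl fun i _ => by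
      rw [show x i + t * u i = (1 - t) * x i + t * y i by simp [hu]; ring]
  rw [hf0, hf1, hft] at happ
  have : c = (∑ i, |y i - x i|) ^ 2 := by simp [hc, hu]
  nlinarith [happ]

open Real Finset in
set_option maxHeartbeats 4000000 in
theorem stmt12 (N M : ℕ) (W : Matrix (Fin N) (Fin M) ℝ)
    (hWnn : ∀ i j, 0 ≤ W i j) (hWrow : ∀ i, ∑ j, W i j = 1)
    (s : Fin N → ℝ) (hs : ∀ i, 0 ≤ s i) (S : ℝ) (hS : 0 ≤ S)
    (r : Fin N → ℝ) (hr : ∀ i, r i = -(∑ j, W i j * Real.logb 2 (W i j)))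
    (ν : ℝ) (hν : 0 < ν)
    -- the feasible set {p ∈ Δ_N : sᵀp = S}, assumed nonempty
    (D : Set (Fin N → ℝ))
    (hD : D = {p | p ∈ stdSimplex ℝ (Fin N) ∧ (∑ i, s i * p i) = S})
    (hfeas : D.Nonempty)
    -- the smoothed objective and the smoothed dual function G_ν
    (obj : EuclideanSpace ℝ (Fin M) → (Fin N → ℝ) → ℝ)
    (hobj : ∀ lam p, obj lam p =
      (∑ j, lam j * (∑ i, p i * W i j)) - (∑ i, r i * p i) +
        ν * (∑ i, -(p i * Real.logb 2 (p i))) - ν * Real.logb 2 N)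
    (Gν : EuclideanSpace ℝ (Fin M) → ℝ)
    (hGν : ∀ lam, Gν lam = sSup {t | ∃ p ∈ D, t = obj lam p}) :
    ∃ pν : EuclideanSpace ℝ (Fin M) → (Fin N → ℝ),
      -- G_ν is well defined: its defining maximum is attained at the unique maximizer p_ν(λ)
      (∀ lam, pν lam ∈ D ∧ obj lam (pν lam) = Gν lam ∧
        ∀ p ∈ D, obj lam p = Gν lam → p = pν lam) ∧
      -- G_ν is convex
      ConvexOn ℝ Set.univ Gν ∧
      -- G_ν is continuously differentiable with gradient Wᵀ p_ν(λ)
      ContDiff ℝ 1 Gν ∧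
      (∀ lam, HasGradientAt Gν
        ((WithLp.equiv 2 (Fin M → ℝ)).symm (fun j => ∑ i, pν lam i * W i j)) lam) ∧
      -- the gradient is Lipschitz continuous with constant 1/ν (Euclidean norm)
      (∀ lam lam' : EuclideanSpace ℝ (Fin M),
        ‖(WithLp.equiv 2 (Fin M → ℝ)).symm (fun j => ∑ i, pν lam i * W i j) -
            (WithLp.equiv 2 (Fin M → ℝ)).symm (fun j => ∑ i, pν lam' i * W i j)‖ ≤
          (1 / ν) * ‖lam - lam'‖) := by
  classical
  set ν' : ℝ := ν / Real.log 2 with hν'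
  have hlog2 : 0 < Real.log 2 := Real.log_pos (by norm_num)
  have hν'pos : 0 < ν' := div_pos hν hlog2
  have hνν' : ν ≤ ν' := by
    rw [hν', le_div_iff₀ hlog2]
    nlinarith [Real.log_two_lt_d9]
  -- rewrite obj in terms of negMulLog
  have hobj2 : ∀ lam p, obj lam p =
      ((∑ j, lam j * (∑ i, p i * W i j)) - (∑ i, r i * p i) - ν * Real.logb 2 N)
      + ν' * ∑ i, Real.negMulLog (p i) := by
    intro lam p
    rw [hobj]
    have e : ∀ i : Fin N, -(p i * Real.logb 2 (p i)) = Real.negMulLog (p i) / Real.log 2 := by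
      intro i
      rw [Real.logb, Real.negMulLog]
      ring
    rw [Finset.sum_congr rfl fun i _ => e i, ← Finset.sum_div, hν']
    ring
  -- D facts
  have hDsub : ∀ p ∈ D, p ∈ stdSimplex ℝ (Fin N) := by
    intro p hp; rw [hD] at hp; exact hp.1
  have hDmix : ∀ p ∈ D, ∀ q ∈ D, ∀ t : ℝ, 0 ≤ t → t ≤ 1 →
      (fun i => (1 - t) * p i + t * q i) ∈ D := by
    intro p hp q hq t h0 h1
    rw [hD] at hp hq ⊢
    obtain ⟨⟨hp1, hp2⟩, hp3⟩ := hp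
    obtain ⟨⟨hq1, hq2⟩, hq3⟩ := hq
    refine ⟨⟨fun i => by have := hp1 i; have := hq1 i; dsimp only; nlinarith, ?_⟩, ?_⟩
    · rw [Finset.sum_add_distrib, ← Finset.mul_sum, ← Finset.mul_sum, hp2, hq2]; ring
    · have e : (∑ i, s i * ((1 - t) * p i + t * q i))
          = (1 - t) * ∑ i, s i * p i + t * ∑ i, s i * q i := by
        rw [Finset.mul_sum, Finset.mul_sum, ← Finset.sum_add_distrib]
        exact Finset.sum_congr rfl fun i _ => by ring
      rw [e, hp3, hq3]; ring
  have hDcomp : IsCompact D := by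
    rw [hD]
    have e : {p : Fin N → ℝ | p ∈ stdSimplex ℝ (Fin N) ∧ (∑ i, s i * p i) = S}
        = stdSimplex ℝ (Fin N) ∩ {p | (∑ i, s i * p i) = S} := rfl
    rw [e]
    exact (isCompact_stdSimplex ℝ (Fin N)).inter_right
      (isClosed_eq (by fun_prop) continuous_const)
  have hcontobj : ∀ lam, Continuous (obj lam) := by
    intro lam
    have e : obj lam = fun p =>
        ((∑ j, lam j * (∑ i, p i * W i j)) - (∑ i, r i * p i) - ν * Real.logb 2 N)
        + ν' * ∑ i, Real.negMulLog (p i) := funext fun p => hobj2 lam p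
    rw [e]
    apply Continuous.add
    · fun_prop
    · apply Continuous.mul continuous_const
      exact continuous_finset_sum _ fun i _ =>
        Real.continuous_negMulLog.comp (continuous_apply i)
  -- the maximizer
  have hexists : ∀ lam : EuclideanSpace ℝ (Fin M),
      ∃ p, p ∈ D ∧ ∀ q ∈ D, obj lam q ≤ obj lam p := by
    intro lam
    obtain ⟨p, hp, hmax⟩ := hDcomp.exists_isMaxOn hfeas (hcontobj lam).continuousOn
    exact ⟨p, hp, fun q hq => hmax hq⟩
  choose pν hpD hpmax using hexists
  have hGval : ∀ lam, Gν lam = obj lam (pν lam) := by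
    intro lam
    rw [hGν]
    apply IsGreatest.csSup_eq
    constructor
    · exact ⟨pν lam, hpD lam, rfl⟩
    · rintro t ⟨q, hq, rfl⟩
      exact hpmax lam q hq
  -- strong optimality
  have hstrong : ∀ lam, ∀ q ∈ D,
      obj lam q + ν' / 2 * (∑ i, |q i - pν lam i|) ^ 2 ≤ obj lam (pν lam) := by
    intro lam q hq
    set p := pν lam with hp
    set c := (∑ i, |q i - p i|) ^ 2 with hc
    have hcnn : 0 ≤ c := sq_nonneg _
    have hmix : ∀ t : ℝ, 0 < t → t < 1 →
        obj lam q + ν' * (1 - t) / 2 * c ≤ obj lam p := by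
      intro t h0 h1
      have hz := hDmix p (hpD lam) q hq t h0.le h1.le
      have hA := aux_strong_concave p q (hDsub p (hpD lam)) (hDsub q hq) h0.le h1.le
      have e1 : ∀ j, (∑ i, ((1 - t) * p i + t * q i) * W i j)
          = (1 - t) * (∑ i, p i * W i j) + t * (∑ i, q i * W i j) := by
        intro j
        rw [Finset.mul_sum, Finset.mul_sum, ← Finset.sum_add_distrib]
        exact Finset.sum_congr rfl fun i _ => by ring
      have e2 : (∑ i, r i * ((1 - t) * p i + t * q i))
          = (1 - t) * (∑ i, r i * p i) + t * (∑ i, r i * q i) := by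
        rw [Finset.mul_sum, Finset.mul_sum, ← Finset.sum_add_distrib]
        exact Finset.sum_congr rfl fun i _ => by ring
      have e3 : (∑ j, lam j * (∑ i, ((1 - t) * p i + t * q i) * W i j))
          = (1 - t) * (∑ j, lam j * (∑ i, p i * W i j))
            + t * (∑ j, lam j * (∑ i, q i * W i j)) := by
        rw [Finset.sum_congr rfl fun j _ => by rw [e1 j]]
        rw [Finset.mul_sum, Finset.mul_sum, ← Finset.sum_add_distrib]
        exact Finset.sum_congr rfl fun j _ => by ring
      have hmaxz := hpmax lam _ hz
      rw [hobj2 lam (fun i => (1 - t) * p i + t * q i)] at hmaxz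
      simp only [e3, e2] at hmaxz
      have hmulA := mul_le_mul_of_nonneg_left hA hν'pos.le
      rw [← hc] at hmulA
      rw [hobj2 lam p] at hmaxz ⊢
      rw [hobj2 lam q]
      set Sp := ∑ j, lam j * ∑ i, p i * W i j with hSp
      set Sq := ∑ j, lam j * ∑ i, q i * W i j with hSq
      set Rp := ∑ i, r i * p i with hRp
      set Rq := ∑ i, r i * q i with hRq
      set Ep := ∑ i, Real.negMulLog (p i) with hEp
      set Eq' := ∑ i, Real.negMulLog (q i) with hEq'
      set Ez := ∑ i, Real.negMulLog ((1 - t) * p i + t * q i) with hEz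
      have hkey : t * ((Sq - Rq + ν' * Eq' + ν' * (1 - t) / 2 * c) - (Sp - Rp + ν' * Ep)) ≤ 0 := by
        nlinarith [hmaxz, hmulA]
      by_contra hcon
      push_neg at hcon
      have hpos2 : 0 < t * ((Sq - Rq - ν * Real.logb 2 ↑N + ν' * Eq' + ν' * (1 - t) / 2 * c)
          - (Sp - Rp - ν * Real.logb 2 ↑N + ν' * Ep)) := mul_pos h0 (by linarith)
      nlinarith [hkey, hpos2]
    by_cases hc0 : c = 0
    · have h := hmix (1/2) (by norm_num) (by norm_num)
      rw [hc0] at h ⊢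
      simpa using h
    · have hcpos : 0 < c := lt_of_le_of_ne hcnn (Ne.symm hc0)
      by_contra hcon
      push_neg at hcon
      set B := ν' / 2 * c with hB
      have hBpos : 0 < B := by positivity
      have hhalf := hmix (1/2) (by norm_num) (by norm_num)
      have hApos : 0 < obj lam p - obj lam q := by nlinarith
      set A := obj lam p - obj lam q with hAdef
      have hAB : A < B := by rw [hAdef, hB]; linarith
      set t0 := (B - A) / (2 * B) with ht0
      have h0 : 0 < t0 := div_pos (by linarith) (by linarith)
      have h1 : t0 < 1 := by rw [ht0, div_lt_one (by linarith)]; linarith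
      have h2 := hmix t0 h0 h1
      have e : ν' * (1 - t0) / 2 * c = (B + A) / 2 := by
        rw [ht0, hB]
        field_simp
        ring
      rw [e] at h2
      rw [hAdef] at hAB
      linarith
  -- Gν is an upper bound
  have hGle : ∀ lam, ∀ q ∈ D, obj lam q ≤ Gν lam := by
    intro lam q hq
    rw [hGval]
    exact hpmax lam q hq
  -- the transpose map
  set gp : (Fin N → ℝ) → EuclideanSpace ℝ (Fin M) :=
    fun p => (WithLp.equiv 2 (Fin M → ℝ)).symm (fun j => ∑ i, p i * W i j) with hgp
  have hgpapp : ∀ p j, gp p j = ∑ i, p i * W i j := by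
    intro p j
    simp only [hgp, WithLp.equiv_symm_apply, PiLp.toLp_apply]
  have hpair : ∀ (a b : EuclideanSpace ℝ (Fin M)) (p : Fin N → ℝ),
      obj a p - obj b p = ∑ j, (a j - b j) * (∑ i, p i * W i j) := by
    intro a b p
    rw [hobj2 a p, hobj2 b p]
    have e : ∑ j, (a j - b j) * (∑ i, p i * W i j)
        = (∑ j, a j * (∑ i, p i * W i j)) - ∑ j, b j * (∑ i, p i * W i j) := by
      rw [← Finset.sum_sub_distrib]
      exact Finset.sum_congr rfl fun j _ => by ring
    rw [e]
    ring
  have hinner : ∀ (v : EuclideanSpace ℝ (Fin M)) (p : Fin N → ℝ),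
      (inner ℝ v (gp p) : ℝ) = ∑ j, v j * ∑ i, p i * W i j := by
    intro v p
    rw [PiLp.inner_apply]
    exact Finset.sum_congr rfl fun j _ => by
      rw [RCLike.inner_apply', starRingEnd_apply, star_trivial, hgpapp]
  have hnormg : ∀ p q : Fin N → ℝ, ‖gp p - gp q‖ ≤ ∑ i, |p i - q i| := by
    intro p q
    have hsub : gp p - gp q
        = (WithLp.equiv 2 (Fin M → ℝ)).symm (fun j => ∑ i, (p i - q i) * W i j) := by
      apply PiLp.ext
      intro j
      simp only [PiLp.sub_apply, hgpapp, WithLp.equiv_symm_apply, PiLp.toLp_apply]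
      rw [← Finset.sum_sub_distrib]
      exact Finset.sum_congr rfl fun i _ => by ring
    rw [hsub]
    have hnn : 0 ≤ ∑ i, |p i - q i| := Finset.sum_nonneg fun i _ => abs_nonneg _
    rw [EuclideanSpace.norm_eq]
    rw [show (∑ i, |p i - q i|) = Real.sqrt ((∑ i, |p i - q i|) ^ 2) from
      (Real.sqrt_sq hnn).symm]
    apply Real.sqrt_le_sqrt
    have step1 : ∀ j, |∑ i, (p i - q i) * W i j| ≤ ∑ i, |p i - q i| * W i j := by
      intro j
      calc |∑ i, (p i - q i) * W i j| ≤ ∑ i, |(p i - q i) * W i j| :=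
            Finset.abs_sum_le_sum_abs _ _
        _ = ∑ i, |p i - q i| * W i j := Finset.sum_congr rfl fun i _ => by
            rw [abs_mul, abs_of_nonneg (hWnn i j)]
    have step3 : ∑ j, ∑ i, |p i - q i| * W i j = ∑ i, |p i - q i| := by
      rw [Finset.sum_comm]
      exact Finset.sum_congr rfl fun i _ => by rw [← Finset.mul_sum, hWrow, mul_one]
    calc ∑ j, ‖((WithLp.equiv 2 (Fin M → ℝ)).symm (fun j => ∑ i, (p i - q i) * W i j)) j‖ ^ 2
        = ∑ j, |∑ i, (p i - q i) * W i j| ^ 2 := by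
          exact Finset.sum_congr rfl fun j _ => by
            rw [WithLp.equiv_symm_apply, PiLp.toLp_apply, Real.norm_eq_abs]
      _ ≤ ∑ j, (∑ i, |p i - q i| * W i j) ^ 2 := Finset.sum_le_sum fun j _ => by
          have h2 := step1 j
          have h3 : 0 ≤ |∑ i, (p i - q i) * W i j| := abs_nonneg _
          nlinarith
      _ ≤ (∑ j, ∑ i, |p i - q i| * W i j) ^ 2 :=
          Finset.sum_sq_le_sq_sum_of_nonneg fun j _ =>
            Finset.sum_nonneg fun i _ => mul_nonneg (abs_nonneg _) (hWnn i j)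
      _ = (∑ i, |p i - q i|) ^ 2 := by rw [step3]
  -- monotonicity inequality
  have hLip : ∀ a b : EuclideanSpace ℝ (Fin M),
      ‖gp (pν a) - gp (pν b)‖ ≤ (1 / ν) * ‖a - b‖ := by
    intro a b
    set d := ∑ i, |pν a i - pν b i| with hd
    have hd0 : 0 ≤ d := Finset.sum_nonneg fun i _ => abs_nonneg _
    have habs : (∑ i, |pν b i - pν a i|) = d := by
      rw [hd]; exact Finset.sum_congr rfl fun i _ => abs_sub_comm _ _
    have h1 := hstrong a (pν b) (hpD b)
    have h2 := hstrong b (pν a) (hpD a)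
    rw [habs] at h1
    rw [show (∑ i, |pν a i - pν b i|) = d from rfl] at h2
    have hmono : ν' * d ^ 2 ≤ (inner ℝ (a - b) (gp (pν a) - gp (pν b)) : ℝ) := by
      rw [inner_sub_right]
      rw [hinner (a - b) (pν a), hinner (a - b) (pν b)]
      have hpa := hpair a b (pν a)
      have hpb := hpair a b (pν b)
      have esub : ∀ p : Fin N → ℝ, (∑ j, (a - b) j * ∑ i, p i * W i j)
          = ∑ j, (a j - b j) * ∑ i, p i * W i j := by
        intro p
        exact Finset.sum_congr rfl fun j _ => by rw [PiLp.sub_apply]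
      rw [esub, esub, ← hpa, ← hpb]
      linarith
    have hgd : ‖gp (pν a) - gp (pν b)‖ ≤ d := hnormg (pν a) (pν b)
    have hin : (inner ℝ (a - b) (gp (pν a) - gp (pν b)) : ℝ)
        ≤ ‖a - b‖ * ‖gp (pν a) - gp (pν b)‖ := real_inner_le_norm _ _
    have hnm : 0 ≤ ‖a - b‖ := norm_nonneg _
    rcases hd0.eq_or_lt with hd' | hd'
    · have : ‖gp (pν a) - gp (pν b)‖ ≤ 0 := by rw [← hd'] at hgd; exact hgd
      have h5 : (0:ℝ) ≤ (1/ν) * ‖a - b‖ := by positivity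
      linarith
    · have hstep : ν' * d ≤ ‖a - b‖ := by nlinarith
      have : d ≤ (1/ν) * ‖a - b‖ := by
        rw [div_mul_eq_mul_div, le_div_iff₀ hν]
        nlinarith
      linarith
  -- gradient
  have hgrad : ∀ lam, HasGradientAt Gν (gp (pν lam)) lam := by
    intro lam
    rw [hasGradientAt_iff_isLittleO]
    have hlb : ∀ b, 0 ≤ Gν b - Gν lam - (inner ℝ (gp (pν lam)) (b - lam) : ℝ) := by
      intro b
      have h1 : obj b (pν lam) ≤ Gν b := hGle b (pν lam) (hpD lam)
      have h2 := hpair b lam (pν lam)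
      have h3 := hinner (b - lam) (pν lam)
      have esub : (∑ j, (b - lam) j * ∑ i, pν lam i * W i j)
          = ∑ j, (b j - lam j) * ∑ i, pν lam i * W i j :=
        Finset.sum_congr rfl fun j _ => by rw [PiLp.sub_apply]
      rw [esub] at h3
      rw [real_inner_comm, h3, ← h2, hGval lam]
      linarith
    have hub : ∀ b, Gν b - Gν lam - (inner ℝ (gp (pν lam)) (b - lam) : ℝ)
        ≤ (1 / ν) * ‖b - lam‖ ^ 2 := by
      intro b
      have h1 : obj lam (pν b) ≤ obj lam (pν lam) := hpmax lam (pν b) (hpD b)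
      have h2 := hpair b lam (pν b)
      have h3 := hinner (b - lam) (pν b)
      have h4 := hinner (b - lam) (pν lam)
      have esub : ∀ p : Fin N → ℝ, (∑ j, (b - lam) j * ∑ i, p i * W i j)
          = ∑ j, (b j - lam j) * ∑ i, p i * W i j := fun p =>
        Finset.sum_congr rfl fun j _ => by rw [PiLp.sub_apply]
      rw [esub] at h3 h4
      have h5 : (inner ℝ (b - lam) (gp (pν b) - gp (pν lam)) : ℝ)
          ≤ ‖b - lam‖ * ‖gp (pν b) - gp (pν lam)‖ := real_inner_le_norm _ _
      have h6 : ‖gp (pν b) - gp (pν lam)‖ ≤ (1/ν) * ‖b - lam‖ := hLip b lam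
      have h7 : (inner ℝ (b - lam) (gp (pν b) - gp (pν lam)) : ℝ)
          = (∑ j, (b j - lam j) * ∑ i, pν b i * W i j)
            - ∑ j, (b j - lam j) * ∑ i, pν lam i * W i j := by
        rw [inner_sub_right, hinner, hinner, esub, esub]
      have hnm : 0 ≤ ‖b - lam‖ := norm_nonneg _
      rw [real_inner_comm, h4, hGval lam, hGval b]
      nlinarith [h5, h6, h7, h1, h2, h3]
    rw [Asymptotics.isLittleO_iff]
    intro ε hε
    have hball : Metric.ball lam (ε * ν) ∈ nhds lam := Metric.ball_mem_nhds _ (by positivity)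
    filter_upwards [hball] with b hb
    rw [Metric.mem_ball, dist_eq_norm] at hb
    have h1 := hlb b
    have h2 := hub b
    rw [Real.norm_eq_abs, abs_of_nonneg h1]
    have hnm : 0 ≤ ‖b - lam‖ := norm_nonneg _
    calc Gν b - Gν lam - (inner ℝ (gp (pν lam)) (b - lam) : ℝ)
        ≤ (1/ν) * ‖b - lam‖ ^ 2 := h2
      _ ≤ ε * ‖b - lam‖ := by
          rw [div_mul_eq_mul_div, one_mul, div_le_iff₀ hν]
          nlinarith
  -- assemble
  refine ⟨pν, ?_, ?_, ?_, fun lam => by simpa only [hgp] using hgrad lam,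
    fun lam lam' => by simpa only [hgp] using hLip lam lam'⟩
  · intro lam
    refine ⟨hpD lam, (hGval lam).symm, ?_⟩
    intro q hq heq
    have h1 := hstrong lam q hq
    rw [← hGval lam, heq] at h1
    have hc0 : (∑ i, |q i - pν lam i|) ^ 2 ≤ 0 := by nlinarith
    have hc1 : (∑ i, |q i - pν lam i|) = 0 := by
      have := Finset.sum_nonneg (fun i (_ : i ∈ Finset.univ) => abs_nonneg (q i - pν lam i))
      nlinarith
    funext i
    have := (Finset.sum_eq_zero_iff_of_nonneg
      (fun i (_ : i ∈ Finset.univ) => abs_nonneg (q i - pν lam i))).1 hc1 i (Finset.mem_univ i)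
    have h2 : q i - pν lam i = 0 := abs_eq_zero.1 this
    linarith
  · refine ⟨convex_univ, ?_⟩
    intro a _ b _ θ τ hθ hτ hsum
    set p := pν (θ • a + τ • b) with hpdef
    have ej : ∀ j, (θ • a + τ • b) j = θ * a j + τ * b j := by
      intro j
      rw [PiLp.add_apply, PiLp.smul_apply, PiLp.smul_apply, smul_eq_mul, smul_eq_mul]
    have hsplit : obj (θ • a + τ • b) p = θ * obj a p + τ * obj b p := by
      rw [hobj2 (θ • a + τ • b) p, hobj2 a p, hobj2 b p]
      rw [Finset.sum_congr rfl fun j (_ : j ∈ Finset.univ) => by rw [ej j]]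
      have e : ∑ j, (θ * a j + τ * b j) * (∑ i, p i * W i j)
          = θ * (∑ j, a j * (∑ i, p i * W i j)) + τ * (∑ j, b j * (∑ i, p i * W i j)) := by
        rw [Finset.mul_sum, Finset.mul_sum, ← Finset.sum_add_distrib]
        exact Finset.sum_congr rfl fun j _ => by ring
      rw [e]
      linear_combination ((∑ i, r i * p i) + ν * Real.logb 2 N
        - ν' * ∑ i, Real.negMulLog (p i)) * hsum
    have h1 : obj a p ≤ Gν a := hGle a p (hpD _)
    have h2 : obj b p ≤ Gν b := hGle b p (hpD _)
    rw [smul_eq_mul, smul_eq_mul]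
    rw [hGval (θ • a + τ • b), ← hpdef, hsplit]
    have := mul_le_mul_of_nonneg_left h1 hθ
    have := mul_le_mul_of_nonneg_left h2 hτ
    linarith
  · rw [contDiff_one_iff_fderiv]
    constructor
    · intro x
      exact ((hgrad x).hasFDerivAt).differentiableAt
    · have hfd : fderiv ℝ Gν = fun x =>
          (InnerProductSpace.toDual ℝ (EuclideanSpace ℝ (Fin M))) (gp (pν x)) :=
        funext fun x => ((hgrad x).hasFDerivAt).fderiv
      rw [hfd]
      apply Continuous.comp (InnerProductSpace.toDual ℝ (EuclideanSpace ℝ (Fin M))).continuous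
      have hlip : LipschitzWith (1/ν).toNNReal (fun x => gp (pν x)) := by
        apply LipschitzWith.of_dist_le_mul
        intro x y
        rw [dist_eq_norm, dist_eq_norm]
        calc ‖gp (pν x) - gp (pν y)‖ ≤ (1/ν) * ‖x - y‖ := hLip x y
          _ = ((1/ν).toNNReal : ℝ) * ‖x - y‖ := by
              rw [Real.coe_toNNReal _ (by positivity)]
      exact hlip.continuous
end

section
/- Suppose the channel W has a k-ordered polynomial tail for some k ∈ (0,1), i.e., R_k(M) < ∞ for all M. Then for every M ∈ ℕ and every probability measure p on 𝕏, |I(p,W) − I(p,W_M)| ≤ (2·log e)/(e·(1−k)) · [ M^{1−k}·(R₁(M))^k + R_k(M) ]. -/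
open MeasureTheory

/-- Shannon entropy (base 2) of a pmf on ℕ. -/
noncomputable def pmfEntropy2 (q : ℕ → ℝ) : ℝ :=
  ∑' i, -(q i * Real.logb 2 (q i))

/-- Mutual information (base 2) of an input distribution `p` and a channel `V` with
countable output alphabet ℕ. -/
noncomputable def mutualInfoCtble {𝕏 : Type*} [MeasurableSpace 𝕏]
    (p : Measure 𝕏) (V : 𝕏 → ℕ → ℝ) : ℝ :=
  pmfEntropy2 (fun i => ∫ x, V x i ∂p) - ∫ x, pmfEntropy2 (V x) ∂p

/-- The `M`-truncated version of a channel `V`. -/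
noncomputable def truncChannel {𝕏 : Type*} (V : 𝕏 → ℕ → ℝ) (M : ℕ) (x : 𝕏) (i : ℕ) : ℝ :=
  if i < M then V x i + (1 / (M : ℝ)) * ∑' j : ℕ, (if M ≤ j then V x j else 0) else 0

/-- The tail quantity `R_k(M) = ∑_{i ≥ M} (sup_x V(i|x))^k`. -/
noncomputable def tailR {𝕏 : Type*} (V : 𝕏 → ℕ → ℝ) (k : ℝ) (M : ℕ) : ℝ :=
  ∑' i : ℕ, if M ≤ i then (⨆ x, V x i) ^ k else 0

open Real in
open Real

lemma core1 {y : ℝ} (hy : 0 ≤ y) : y * Real.exp (-y) ≤ Real.exp (-1) := by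
  have h := Real.add_one_le_exp (y - 1)
  have h2 : y ≤ Real.exp (y - 1) := by linarith
  calc y * Real.exp (-y) ≤ Real.exp (y - 1) * Real.exp (-y) :=
        mul_le_mul_of_nonneg_right h2 (Real.exp_nonneg _)
    _ = Real.exp (-1) := by rw [← Real.exp_add]; ring_nf

lemma negMulLog_le_rpow {k t : ℝ} (hk0 : 0 < k) (hk1 : k < 1) (ht0 : 0 ≤ t) (ht1 : t ≤ 1) :
    Real.negMulLog t ≤ t ^ k / (Real.exp 1 * (1 - k)) := by
  rcases eq_or_lt_of_le ht0 with h | h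
  · simp [← h, Real.negMulLog, Real.zero_rpow (ne_of_gt hk0)]
  · have hs0 : (0:ℝ) < 1 - k := by linarith
    have hlt : Real.log t ≤ 0 := Real.log_nonpos ht0 ht1
    have hy0 : 0 ≤ (1 - k) * (-Real.log t) := mul_nonneg hs0.le (by linarith)
    have hts : t ^ (1 - k) = Real.exp (-((1 - k) * (-Real.log t))) := by
      rw [Real.rpow_def_of_pos h]
      congr 1
      ring
    have htsplit : t ^ k * Real.exp (-((1 - k) * (-Real.log t))) = t := by
      rw [← hts, ← Real.rpow_add h]; norm_num
    have hlogt : -Real.log t = ((1 - k) * (-Real.log t)) / (1 - k) := by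
      field_simp
    calc Real.negMulLog t = t * (((1 - k) * (-Real.log t)) / (1 - k)) := by
          rw [Real.negMulLog, ← hlogt]; ring
      _ = t ^ k * (((1 - k) * (-Real.log t)) * Real.exp (-((1 - k) * (-Real.log t)))) / (1 - k) := by
          nth_rewrite 1 [← htsplit]; ring
      _ ≤ t ^ k * Real.exp (-1) / (1 - k) := by
          have h5 := mul_le_mul_of_nonneg_left (core1 hy0) (Real.rpow_nonneg ht0 k)
          exact (div_le_div_iff_of_pos_right hs0).mpr h5

      _ ≤ t ^ k / (Real.exp 1 * (1 - k)) := by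
          rw [Real.exp_neg]
          apply le_of_eq
          field_simp

lemma negMulLog_le_inv_e {t : ℝ} (ht0 : 0 ≤ t) : Real.negMulLog t ≤ (Real.exp 1)⁻¹ := by
  rcases eq_or_lt_of_le ht0 with h | h
  · simp [← h]; positivity
  · rcases le_or_gt t 1 with h1 | h1
    · have hy0 : (0:ℝ) ≤ -Real.log t := by
        have := Real.log_nonpos ht0 h1; linarith
      have heq : Real.negMulLog t = (-Real.log t) * Real.exp (-(-Real.log t)) := by
        rw [Real.negMulLog, neg_neg, Real.exp_log h]; ring
      rw [heq, ← Real.exp_neg]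
      exact core1 hy0
    · have : Real.negMulLog t ≤ 0 := by
        rw [Real.negMulLog]
        have := Real.log_pos h1
        nlinarith
      exact this.trans (by positivity)

lemma negMulLog_subadd {a δ : ℝ} (ha : 0 ≤ a) (hd : 0 ≤ δ) :
    Real.negMulLog (a + δ) ≤ Real.negMulLog a + Real.negMulLog δ := by
  rcases eq_or_lt_of_le ha with h | h
  · simp [← h]
  rcases eq_or_lt_of_le hd with h' | h'
  · simp [← h']
  simp only [Real.negMulLog]
  have l1 : Real.log a ≤ Real.log (a + δ) := Real.log_le_log h (by linarith)
  have l2 : Real.log δ ≤ Real.log (a + δ) := Real.log_le_log h' (by linarith)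
  nlinarith

lemma negMulLog_drop {a δ : ℝ} (ha : 0 ≤ a) (hd : 0 ≤ δ) (h1 : a + δ ≤ 1) :
    Real.negMulLog a - Real.negMulLog (a + δ) ≤ min δ (Real.exp 1)⁻¹ := by
  have hnn : 0 ≤ Real.negMulLog (a + δ) := Real.negMulLog_nonneg (by linarith) h1
  refine le_min ?_ ?_
  · rcases eq_or_lt_of_le ha with h | h
    · have hz : Real.negMulLog a = 0 := by rw [← h]; simp
      linarith
    · rcases eq_or_lt_of_le hd with h' | h'
      · have : Real.negMulLog (a + δ) = Real.negMulLog a := by rw [← h']; ring_nf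
        linarith
      have llog : Real.log (a + δ) - Real.log a ≤ δ / a := by
        have heq : Real.log (a + δ) - Real.log a = Real.log ((a + δ) / a) := by
          rw [Real.log_div (by linarith) (ne_of_gt h)]
        rw [heq]
        have := Real.log_le_sub_one_of_pos (show (0:ℝ) < (a + δ)/a by positivity)
        have heq2 : (a + δ) / a - 1 = δ / a := by field_simp; ring
        linarith
      have hlognp : Real.log (a + δ) ≤ 0 := Real.log_nonpos (by linarith) h1
      have h3 : a * (Real.log (a + δ) - Real.log a) ≤ δ := by
        have := mul_le_mul_of_nonneg_left llog h.le
        have hda : a * (δ / a) = δ := by field_simp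
        linarith
      have h4 : δ * Real.log (a + δ) ≤ 0 := mul_nonpos_of_nonneg_of_nonpos hd hlognp
      simp only [Real.negMulLog]
      nlinarith
  · have := negMulLog_le_inv_e (show (0:ℝ) ≤ a from ha)
    linarith

lemma min_le_rpow_bound {k δ : ℝ} (hk0 : 0 < k) (hk1 : k < 1) (hd0 : 0 ≤ δ) (hd1 : δ ≤ 1) :
    min δ (Real.exp 1)⁻¹ ≤ δ ^ k / (Real.exp 1 * (1 - k)) := by
  have hs0 : (0:ℝ) < 1 - k := by linarith
  have he : (0:ℝ) < Real.exp 1 := Real.exp_pos 1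
  rcases le_or_gt δ (Real.exp 1)⁻¹ with h | h
  · refine (min_le_left _ _).trans ?_
    rcases eq_or_lt_of_le hd0 with h0 | h0
    · rw [← h0, Real.zero_rpow (ne_of_gt hk0)]; norm_num
    have step1 : δ = δ ^ k * δ ^ (1 - k) := by
      rw [← Real.rpow_add h0]; norm_num
    have step2 : δ ^ (1 - k) ≤ Real.exp (-(1 - k)) := by
      calc δ ^ (1 - k) ≤ ((Real.exp 1)⁻¹) ^ (1 - k) :=
            Real.rpow_le_rpow hd0 h hs0.le
        _ = Real.exp (-(1 - k)) := by
            rw [Real.rpow_def_of_pos (by positivity), Real.log_inv, Real.log_exp]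
            ring_nf
    have step3 : Real.exp (-(1 - k)) ≤ (Real.exp 1 * (1 - k))⁻¹ := by
      rw [Real.exp_neg]
      rw [inv_le_inv₀ (Real.exp_pos _) (by positivity)]
      have hadd := Real.add_one_le_exp ((1 - k) - 1)
      have h2 : 1 - k ≤ Real.exp ((1 - k) - 1) := by linarith
      calc Real.exp 1 * (1 - k) ≤ Real.exp 1 * Real.exp ((1-k) - 1) :=
            mul_le_mul_of_nonneg_left h2 he.le
        _ = Real.exp (1 - k) := by rw [← Real.exp_add]; ring_nf
    have hdk : (0:ℝ) ≤ δ ^ k := Real.rpow_nonneg hd0 k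
    calc δ = δ ^ k * δ ^ (1 - k) := step1
      _ ≤ δ ^ k * (Real.exp 1 * (1 - k))⁻¹ :=
          mul_le_mul_of_nonneg_left (step2.trans step3) hdk
      _ = δ ^ k / (Real.exp 1 * (1 - k)) := by rw [div_eq_mul_inv]
  · refine (min_le_right _ _).trans ?_
    have hdk : Real.exp (-k) ≤ δ ^ k := by
      calc Real.exp (-k) = ((Real.exp 1)⁻¹) ^ k := by
            rw [Real.rpow_def_of_pos (by positivity), Real.log_inv, Real.log_exp]
            ring_nf
        _ ≤ δ ^ k := Real.rpow_le_rpow (by positivity) h.le hk0.le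
    have h1k : 1 - k ≤ Real.exp (-k) := by
      have := Real.add_one_le_exp (-k); linarith
    rw [le_div_iff₀ (by positivity)]
    have heq : (Real.exp 1)⁻¹ * (Real.exp 1 * (1 - k)) = 1 - k := by field_simp
    rw [heq]
    linarith


open Real in
noncomputable def ent2 (t : ℝ) : ℝ := -(t * Real.logb 2 t)

lemma ent2_eq (t : ℝ) : ent2 t = Real.logb 2 (Real.exp 1) * Real.negMulLog t := by
  simp only [ent2, Real.logb, Real.negMulLog, Real.log_exp]
  ring

lemma c2_pos : 0 < Real.logb 2 (Real.exp 1) := by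
  rw [Real.logb, Real.log_exp]
  exact div_pos one_pos (Real.log_pos (by norm_num))

lemma ent2_zero : ent2 0 = 0 := by simp [ent2]

lemma ent2_nonneg {t : ℝ} (h0 : 0 ≤ t) (h1 : t ≤ 1) : 0 ≤ ent2 t := by
  rw [ent2_eq]; exact mul_nonneg c2_pos.le (Real.negMulLog_nonneg h0 h1)

lemma ent2_le_rpow {k t : ℝ} (hk0 : 0 < k) (hk1 : k < 1) (ht0 : 0 ≤ t) (ht1 : t ≤ 1) :
    ent2 t ≤ Real.logb 2 (Real.exp 1) * (t ^ k / (Real.exp 1 * (1 - k))) := by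
  rw [ent2_eq]
  exact mul_le_mul_of_nonneg_left (negMulLog_le_rpow hk0 hk1 ht0 ht1) c2_pos.le

lemma ent2_drop_bound {k a δ : ℝ} (hk0 : 0 < k) (hk1 : k < 1) (ha : 0 ≤ a) (hd0 : 0 ≤ δ)
    (hd1 : δ ≤ 1) (h1 : a + δ ≤ 1) :
    |ent2 a - ent2 (a + δ)| ≤ Real.logb 2 (Real.exp 1) * (δ ^ k / (Real.exp 1 * (1 - k))) := by
  have hc := c2_pos
  have hup : ent2 a - ent2 (a + δ) ≤
      Real.logb 2 (Real.exp 1) * (δ ^ k / (Real.exp 1 * (1 - k))) := by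
    rw [ent2_eq, ent2_eq, ← mul_sub]
    exact mul_le_mul_of_nonneg_left
      ((negMulLog_drop ha hd0 h1).trans (min_le_rpow_bound hk0 hk1 hd0 hd1)) hc.le
  have hdn : ent2 (a + δ) - ent2 a ≤
      Real.logb 2 (Real.exp 1) * (δ ^ k / (Real.exp 1 * (1 - k))) := by
    have hsub : ent2 (a + δ) ≤ ent2 a + ent2 δ := by
      rw [ent2_eq, ent2_eq, ent2_eq, ← mul_add]
      exact mul_le_mul_of_nonneg_left (negMulLog_subadd ha hd0) hc.le
    have := ent2_le_rpow hk0 hk1 hd0 hd1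
    linarith
  rw [abs_le]; constructor <;> linarith

lemma summable_tail {f : ℕ → ℝ} (hf : Summable f) (M : ℕ) :
    Summable (fun i => if M ≤ i then f i else 0) := by
  refine (hf.indicator {i | M ≤ i}).congr fun i => ?_
  simp [Set.indicator_apply]

lemma tsum_split (f : ℕ → ℝ) (hf : Summable f) (M : ℕ) :
    ∑' i, f i = (∑ i ∈ Finset.range M, f i) + ∑' i, if M ≤ i then f i else 0 := by
  have h := Summable.sum_add_tsum_compl (s := Finset.range M) hf
  rw [← h]
  congr 1
  rw [tsum_subtype]
  apply tsum_congr; intro i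
  simp [Set.indicator_apply, Finset.mem_coe, Finset.mem_range, not_lt]


open Real MeasureTheory in
lemma entropy_trunc_bound (q : ℕ → ℝ) (hq0 : ∀ i, 0 ≤ q i) (hq1 : HasSum q 1)
    {k : ℝ} (hk0 : 0 < k) (hk1 : k < 1) (M : ℕ) (hM : 0 < M)
    (hsum : Summable fun i => q i ^ k) :
    |(∑' i, ent2 (q i)) -
        ∑ i ∈ Finset.range M, ent2 (q i + 1 / (M:ℝ) * ∑' j, if M ≤ j then q j else 0)|
      ≤ Real.logb 2 (Real.exp 1) / (Real.exp 1 * (1 - k)) *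
        ((M:ℝ) ^ (1 - k) * (∑' j, if M ≤ j then q j else 0) ^ k +
          ∑' i, if M ≤ i then q i ^ k else 0) := by
  have hE : (0:ℝ) < Real.exp 1 * (1 - k) := by
    have : (0:ℝ) < 1 - k := by linarith
    positivity
  set c := Real.logb 2 (Real.exp 1) with hc
  have hcpos := c2_pos
  set T := ∑' j, if M ≤ j then q j else 0 with hT
  set δ := 1 / (M:ℝ) * T with hδ
  have hq : Summable q := hq1.summable
  have hqle1 : ∀ i, q i ≤ 1 := fun i => le_hasSum hq1 i fun j _ => hq0 j
  have hT0 : 0 ≤ T := tsum_nonneg fun i => by by_cases h : M ≤ i <;> simp [h, hq0 i]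
  have hsplit1 : (∑ i ∈ Finset.range M, q i) + T = 1 := by
    have := tsum_split q hq M
    rw [hq1.tsum_eq] at this
    linarith
  have hsum0 : 0 ≤ ∑ i ∈ Finset.range M, q i := Finset.sum_nonneg fun i _ => hq0 i
  have hT1 : T ≤ 1 := by linarith
  have hM1 : (1:ℝ) ≤ (M:ℝ) := by exact_mod_cast hM
  have hδ0 : 0 ≤ δ := by
    rw [hδ]; positivity
  have hδT : δ ≤ T := by
    rw [hδ]
    calc 1 / (M:ℝ) * T ≤ 1 * T := by
          apply mul_le_mul_of_nonneg_right _ hT0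
          rw [div_le_one (by linarith)]
          exact hM1
      _ = T := one_mul T
  have hδ1 : δ ≤ 1 := hδT.trans hT1
  have hup : ∀ i ∈ Finset.range M, q i + δ ≤ 1 := by
    intro i hi
    have h1 : q i ≤ ∑ j ∈ Finset.range M, q j :=
      Finset.single_le_sum (fun j _ => hq0 j) hi
    linarith
  -- summability of entropy series
  have hentle : ∀ i, ent2 (q i) ≤ c / (Real.exp 1 * (1 - k)) * q i ^ k := by
    intro i
    have := ent2_le_rpow hk0 hk1 (hq0 i) (hqle1 i)
    calc ent2 (q i) ≤ c * (q i ^ k / (Real.exp 1 * (1 - k))) := this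
      _ = c / (Real.exp 1 * (1 - k)) * q i ^ k := by ring
  have hentnn : ∀ i, 0 ≤ ent2 (q i) := fun i => ent2_nonneg (hq0 i) (hqle1 i)
  have hentsum : Summable fun i => ent2 (q i) :=
    Summable.of_nonneg_of_le hentnn hentle (hsum.mul_left _)
  -- split entropy sum
  have hsplitent := tsum_split (fun i => ent2 (q i)) hentsum M
  set Ttail := ∑' i, if M ≤ i then ent2 (q i) else 0 with hTt
  set Qk := ∑' i, if M ≤ i then q i ^ k else 0 with hQk
  have hTt0 : 0 ≤ Ttail :=
    tsum_nonneg fun i => by by_cases h : M ≤ i <;> simp [h, hentnn i]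
  have hTtle : Ttail ≤ c / (Real.exp 1 * (1 - k)) * Qk := by
    rw [hTt, hQk, ← tsum_mul_left]
    apply Summable.tsum_le_tsum _ (summable_tail hentsum M)
      ((summable_tail hsum M).mul_left _)
    intro i
    by_cases h : M ≤ i <;> simp [h, hentle i]
  -- per-term bound on the head
  have hhead : ∀ i ∈ Finset.range M,
      |ent2 (q i) - ent2 (q i + δ)| ≤ c * (δ ^ k / (Real.exp 1 * (1 - k))) := by
    intro i hi
    exact ent2_drop_bound hk0 hk1 (hq0 i) hδ0 hδ1 (hup i hi)
  have hheadsum : |∑ i ∈ Finset.range M, (ent2 (q i) - ent2 (q i + δ))|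
      ≤ (M:ℝ) * (c * (δ ^ k / (Real.exp 1 * (1 - k)))) := by
    calc |∑ i ∈ Finset.range M, (ent2 (q i) - ent2 (q i + δ))|
        ≤ ∑ i ∈ Finset.range M, |ent2 (q i) - ent2 (q i + δ)| :=
          Finset.abs_sum_le_sum_abs _ _
      _ ≤ ∑ _i ∈ Finset.range M, c * (δ ^ k / (Real.exp 1 * (1 - k))) :=
          Finset.sum_le_sum hhead
      _ = (M:ℝ) * (c * (δ ^ k / (Real.exp 1 * (1 - k)))) := by
          rw [Finset.sum_const, Finset.card_range]; simp [nsmul_eq_mul]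
  -- M * δ^k = M^(1-k) * T^k
  have hMδ : (M:ℝ) * δ ^ k = (M:ℝ) ^ (1 - k) * T ^ k := by
    have hMpos : (0:ℝ) < (M:ℝ) := by linarith
    rw [hδ, one_div, mul_comm ((M:ℝ)⁻¹) T, Real.mul_rpow hT0 (by positivity),
      Real.inv_rpow hMpos.le, Real.rpow_sub hMpos, Real.rpow_one]
    field_simp
  -- put it together
  have hkey : (∑' i, ent2 (q i)) -
      (∑ i ∈ Finset.range M, ent2 (q i + δ)) =
      (∑ i ∈ Finset.range M, (ent2 (q i) - ent2 (q i + δ))) + Ttail := by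
    rw [hsplitent, Finset.sum_sub_distrib]
    ring
  rw [hkey]
  have habs : |(∑ i ∈ Finset.range M, (ent2 (q i) - ent2 (q i + δ))) + Ttail|
      ≤ (M:ℝ) * (c * (δ ^ k / (Real.exp 1 * (1 - k)))) +
        c / (Real.exp 1 * (1 - k)) * Qk := by
    rw [abs_le] at hheadsum ⊢
    constructor
    · have := hheadsum.1
      have h2 : 0 ≤ c / (Real.exp 1 * (1 - k)) * Qk := by
        have hQk0 : 0 ≤ Qk := tsum_nonneg fun i => by
          by_cases h : M ≤ i <;> simp [h, Real.rpow_nonneg (hq0 i)]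
        positivity
      linarith
    · have := hheadsum.2
      linarith
  refine habs.trans (le_of_eq ?_)
  rw [← hMδ]
  field_simp


open Real MeasureTheory in
lemma tail_eq {q : ℕ → ℝ} (hq1 : HasSum q 1) (M : ℕ) :
    (∑' j, if M ≤ j then q j else 0) = 1 - ∑ j ∈ Finset.range M, q j := by
  have h := tsum_split q hq1.summable M
  rw [hq1.tsum_eq] at h
  linarith

lemma pmfEntropy2_eq (q : ℕ → ℝ) : pmfEntropy2 q = ∑' i, ent2 (q i) := rfl

lemma pmfEntropy2_ite (a : ℕ → ℝ) (M : ℕ) :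
    pmfEntropy2 (fun i => if i < M then a i else 0) = ∑ i ∈ Finset.range M, ent2 (a i) := by
  rw [pmfEntropy2_eq]
  rw [tsum_eq_sum (s := Finset.range M) (fun b hb => by
    rw [if_neg (by simpa using hb), ent2_zero])]
  exact Finset.sum_congr rfl fun i hi => by rw [if_pos (Finset.mem_range.mp hi)]

lemma measurable_ent2 {𝕏 : Type*} [MeasurableSpace 𝕏] {g : 𝕏 → ℝ} (hg : Measurable g) :
    Measurable fun x => ent2 (g x) := by
  have : (fun x => ent2 (g x)) = fun x =>
      Real.logb 2 (Real.exp 1) * Real.negMulLog (g x) := funext fun x => ent2_eq _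
  rw [this]
  exact (Real.continuous_negMulLog.measurable.comp hg).const_mul _

theorem stmt13 {𝕏 : Type*} [MeasurableSpace 𝕏] [Nonempty 𝕏]
    (W : 𝕏 → ℕ → ℝ)
    (hWmeas : ∀ i, Measurable fun x => W x i)
    (hWnn : ∀ x i, 0 ≤ W x i)
    (hWsum : ∀ x, HasSum (W x) 1)
    (k : ℝ) (hk0 : 0 < k) (hk1 : k < 1)
    -- k-ordered polynomial tail: R_k(M) < ∞ for all M
    (htail : ∀ M : ℕ, Summable fun i : ℕ => if M ≤ i then (⨆ x, W x i) ^ k else 0)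
    (M : ℕ) (hM : 0 < M)
    (p : Measure 𝕏) [IsProbabilityMeasure p] :
    |mutualInfoCtble p W - mutualInfoCtble p (truncChannel W M)| ≤
      2 * Real.logb 2 (Real.exp 1) / (Real.exp 1 * (1 - k)) *
        ((M : ℝ) ^ (1 - k) * tailR W 1 M ^ k + tailR W k M) := by
  have h1k : (0:ℝ) < 1 - k := by linarith
  have hE : (0:ℝ) < Real.exp 1 * (1 - k) := by positivity
  set c := Real.logb 2 (Real.exp 1) with hc
  have hcpos := c2_pos
  set s : ℕ → ℝ := fun i => ⨆ x, W x i with hsdef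
  -- basic facts
  have hW1 : ∀ x i, W x i ≤ 1 := fun x i => le_hasSum (hWsum x) i fun j _ => hWnn x j
  have hbdd : ∀ i, BddAbove (Set.range fun x => W x i) := fun i =>
    ⟨1, fun v ⟨x, hx⟩ => hx ▸ hW1 x i⟩
  have hsle : ∀ x i, W x i ≤ s i := fun x i => le_ciSup (hbdd i) x
  have hs0 : ∀ i, 0 ≤ s i := fun i => by
    obtain ⟨x0⟩ := ‹Nonempty 𝕏›
    exact (hWnn x0 i).trans (hsle x0 i)
  have hs1 : ∀ i, s i ≤ 1 := fun i => ciSup_le fun x => hW1 x i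
  have hsk : Summable fun i => s i ^ k := by
    refine (htail 0).congr fun i => ?_
    simp [Nat.zero_le i]; rfl
  have hssk : ∀ i, s i ≤ s i ^ k := by
    intro i
    rcases eq_or_lt_of_le (hs0 i) with h | h
    · rw [← h, Real.zero_rpow (ne_of_gt hk0)]
    · have h2 := Real.rpow_le_rpow_of_exponent_ge h (hs1 i) hk1.le
      rwa [Real.rpow_one] at h2
  have hssum : Summable s := Summable.of_nonneg_of_le hs0 hssk hsk
  have hWsummable : ∀ x, Summable (W x) := fun x => (hWsum x).summable
  have hWk : ∀ x, Summable fun i => W x i ^ k := fun x =>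
    Summable.of_nonneg_of_le (fun i => Real.rpow_nonneg (hWnn x i) k)
      (fun i => Real.rpow_le_rpow (hWnn x i) (hsle x i) hk0.le) hsk
  set S1 := ∑' i, if M ≤ i then s i else 0 with hS1
  have hS1tail : tailR W 1 M = S1 := by
    rw [tailR, hS1]
    exact tsum_congr fun i => by by_cases h : M ≤ i <;> simp [h, Real.rpow_one, hsdef]
  set Rk := tailR W k M with hRk
  have hRkdef : Rk = ∑' i, if M ≤ i then s i ^ k else 0 := rfl
  have hS1_0 : 0 ≤ S1 := tsum_nonneg fun i => by by_cases h : M ≤ i <;> simp [h, hs0 i]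
  have hRk_0 : 0 ≤ Rk := tsum_nonneg fun i => by
    by_cases h : M ≤ i <;> simp [h, Real.rpow_nonneg (hs0 i)] <;> exact Real.rpow_nonneg (hs0 i) k
  have hsum_tail_s : Summable (fun i => if M ≤ i then s i else 0) := summable_tail hssum M
  -- per-x tail comparisons
  have hTx0 : ∀ x, 0 ≤ ∑' j, if M ≤ j then W x j else 0 := fun x =>
    tsum_nonneg fun i => by by_cases h : M ≤ i <;> simp [h, hWnn x i]
  have hTx_le : ∀ x, (∑' j, if M ≤ j then W x j else 0) ≤ S1 := fun x => by
    rw [hS1]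
    exact Summable.tsum_le_tsum (fun i => by by_cases h : M ≤ i <;> simp [h, hsle x i])
      (summable_tail (hWsummable x) M) hsum_tail_s
  have hQx_le : ∀ x, (∑' i, if M ≤ i then W x i ^ k else 0) ≤ Rk := fun x => by
    rw [hRkdef]
    exact Summable.tsum_le_tsum
      (fun i => by
        by_cases h : M ≤ i <;>
          simp [h, Real.rpow_le_rpow (hWnn x i) (hsle x i) hk0.le])
      (summable_tail (hWk x) M) (htail M)
  set Bd := c / (Real.exp 1 * (1 - k)) * ((M:ℝ) ^ (1 - k) * S1 ^ k + Rk) with hBd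
  have hMk0 : (0:ℝ) ≤ (M:ℝ) ^ (1 - k) := Real.rpow_nonneg (Nat.cast_nonneg M) _
  -- per-x entropy bound
  have hxbound : ∀ x, |pmfEntropy2 (W x) - pmfEntropy2 (truncChannel W M x)| ≤ Bd := by
    intro x
    have heq : pmfEntropy2 (truncChannel W M x) =
        ∑ i ∈ Finset.range M,
          ent2 (W x i + 1 / (M:ℝ) * ∑' j, if M ≤ j then W x j else 0) := by
      rw [show truncChannel W M x = fun i => if i < M then
          W x i + 1 / (M:ℝ) * ∑' j, if M ≤ j then W x j else 0 else 0 from rfl]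
      exact pmfEntropy2_ite _ M
    rw [pmfEntropy2_eq, heq]
    have hb := entropy_trunc_bound (W x) (hWnn x) (hWsum x) hk0 hk1 M hM (hWk x)
    refine hb.trans ?_
    rw [← hc, hBd]
    apply mul_le_mul_of_nonneg_left _ (by positivity)
    have h1 : (∑' j, if M ≤ j then W x j else 0) ^ k ≤ S1 ^ k :=
      Real.rpow_le_rpow (hTx0 x) (hTx_le x) hk0.le
    exact add_le_add (mul_le_mul_of_nonneg_left h1 hMk0) (hQx_le x)
  -- summability and bound of entropy series of W x
  have hent_sum : ∀ x, Summable fun i => ent2 (W x i) := by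
    intro x
    refine Summable.of_nonneg_of_le (fun i => ent2_nonneg (hWnn x i) (hW1 x i))
      (fun i => ?_) ((hWk x).mul_left (c / (Real.exp 1 * (1 - k))))
    calc ent2 (W x i) ≤ c * (W x i ^ k / (Real.exp 1 * (1 - k))) :=
          ent2_le_rpow hk0 hk1 (hWnn x i) (hW1 x i)
      _ = c / (Real.exp 1 * (1 - k)) * W x i ^ k := by ring
  have hent_nonneg : ∀ x, 0 ≤ pmfEntropy2 (W x) := fun x => by
    rw [pmfEntropy2_eq]
    exact tsum_nonneg fun i => ent2_nonneg (hWnn x i) (hW1 x i)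
  have hent_bound : ∀ x, pmfEntropy2 (W x) ≤
      c / (Real.exp 1 * (1 - k)) * ∑' i, s i ^ k := by
    intro x
    rw [pmfEntropy2_eq, ← tsum_mul_left]
    refine Summable.tsum_le_tsum (fun i => ?_) (hent_sum x) (hsk.mul_left _)
    calc ent2 (W x i) ≤ c * (W x i ^ k / (Real.exp 1 * (1 - k))) :=
          ent2_le_rpow hk0 hk1 (hWnn x i) (hW1 x i)
      _ = c / (Real.exp 1 * (1 - k)) * W x i ^ k := by ring
      _ ≤ c / (Real.exp 1 * (1 - k)) * s i ^ k := by
          exact mul_le_mul_of_nonneg_left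
            (Real.rpow_le_rpow (hWnn x i) (hsle x i) hk0.le) (by positivity)
  have hent_meas : Measurable fun x => pmfEntropy2 (W x) := by
    have heq : (fun x => pmfEntropy2 (W x)) =
        fun x => (∑' i, ENNReal.ofReal (ent2 (W x i))).toReal := by
      funext x
      rw [pmfEntropy2_eq,
        ← ENNReal.ofReal_tsum_of_nonneg (fun i => ent2_nonneg (hWnn x i) (hW1 x i))
          (hent_sum x),
        ENNReal.toReal_ofReal
          (tsum_nonneg fun i => ent2_nonneg (hWnn x i) (hW1 x i))]
    rw [heq]
    exact (Measurable.ennreal_tsum fun i =>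
      ENNReal.measurable_ofReal.comp (measurable_ent2 (hWmeas i))).ennreal_toReal
  have hint1 : Integrable (fun x => pmfEntropy2 (W x)) p := by
    refine Integrable.mono' (integrable_const (c / (Real.exp 1 * (1 - k)) * ∑' i, s i ^ k))
      hent_meas.aestronglyMeasurable (ae_of_all _ fun x => ?_)
    rw [Real.norm_eq_abs, abs_of_nonneg (hent_nonneg x)]
    exact hent_bound x
  -- the truncated conditional entropy: finite-sum form
  have htail_fin : ∀ x, (∑' j, if M ≤ j then W x j else 0) =
      1 - ∑ j ∈ Finset.range M, W x j := fun x => tail_eq (hWsum x) M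
  have htrunc_eq : ∀ x, pmfEntropy2 (truncChannel W M x) =
      ∑ i ∈ Finset.range M,
        ent2 (W x i + 1 / (M:ℝ) * (1 - ∑ j ∈ Finset.range M, W x j)) := by
    intro x
    rw [show truncChannel W M x = fun i => if i < M then
        W x i + 1 / (M:ℝ) * ∑' j, if M ≤ j then W x j else 0 else 0 from rfl]
    rw [pmfEntropy2_ite _ M]
    exact Finset.sum_congr rfl fun i _ => by rw [htail_fin x]
  have hM1 : (1:ℝ) ≤ (M:ℝ) := by exact_mod_cast hM
  have hδx0 : ∀ x, 0 ≤ 1 / (M:ℝ) * (1 - ∑ j ∈ Finset.range M, W x j) := by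
    intro x
    have h0 := hTx0 x
    rw [htail_fin x] at h0
    positivity
  have hargs : ∀ x, ∀ i ∈ Finset.range M,
      0 ≤ W x i + 1 / (M:ℝ) * (1 - ∑ j ∈ Finset.range M, W x j) ∧
      W x i + 1 / (M:ℝ) * (1 - ∑ j ∈ Finset.range M, W x j) ≤ 1 := by
    intro x i hi
    have h0 := hTx0 x
    rw [htail_fin x] at h0
    have hhead : W x i ≤ ∑ j ∈ Finset.range M, W x j :=
      Finset.single_le_sum (fun j _ => hWnn x j) hi
    have hδle : 1 / (M:ℝ) * (1 - ∑ j ∈ Finset.range M, W x j) ≤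
        1 - ∑ j ∈ Finset.range M, W x j := by
      apply mul_le_of_le_one_left h0
      rw [div_le_one (by linarith)]
      exact hM1
    exact ⟨add_nonneg (hWnn x i) (hδx0 x), by linarith⟩
  have hint2 : Integrable (fun x => pmfEntropy2 (truncChannel W M x)) p := by
    have heq : (fun x => pmfEntropy2 (truncChannel W M x)) =
        fun x => ∑ i ∈ Finset.range M,
          ent2 (W x i + 1 / (M:ℝ) * (1 - ∑ j ∈ Finset.range M, W x j)) :=
      funext htrunc_eq
    rw [heq]
    have hmeas : Measurable fun x => ∑ i ∈ Finset.range M,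
        ent2 (W x i + 1 / (M:ℝ) * (1 - ∑ j ∈ Finset.range M, W x j)) := by
      apply Finset.measurable_sum
      intro i _
      apply measurable_ent2
      exact (hWmeas i).add
        (((Finset.measurable_sum _ fun j _ => hWmeas j).const_sub 1).const_mul _)
    refine Integrable.mono' (integrable_const ((M:ℝ) * (c * (Real.exp 1)⁻¹)))
      hmeas.aestronglyMeasurable (ae_of_all _ fun x => ?_)
    rw [Real.norm_eq_abs]
    have hterm : ∀ i ∈ Finset.range M,
        ent2 (W x i + 1 / (M:ℝ) * (1 - ∑ j ∈ Finset.range M, W x j)) ≤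
          c * (Real.exp 1)⁻¹ := by
      intro i hi
      rw [ent2_eq]
      exact mul_le_mul_of_nonneg_left (negMulLog_le_inv_e (hargs x i hi).1) hcpos.le
    have htermnn : ∀ i ∈ Finset.range M,
        0 ≤ ent2 (W x i + 1 / (M:ℝ) * (1 - ∑ j ∈ Finset.range M, W x j)) := fun i hi =>
      ent2_nonneg (hargs x i hi).1 (hargs x i hi).2
    rw [abs_of_nonneg (Finset.sum_nonneg htermnn)]
    calc (∑ i ∈ Finset.range M, ent2 (W x i + 1 / (M:ℝ) *
            (1 - ∑ j ∈ Finset.range M, W x j)))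
        ≤ ∑ _i ∈ Finset.range M, c * (Real.exp 1)⁻¹ := Finset.sum_le_sum hterm
      _ = (M:ℝ) * (c * (Real.exp 1)⁻¹) := by
          rw [Finset.sum_const, Finset.card_range, nsmul_eq_mul]
  -- output distribution
  set pW : ℕ → ℝ := fun i => ∫ x, W x i ∂p with hpWdef
  have hWint : ∀ i, Integrable (fun x => W x i) p := fun i =>
    Integrable.mono' (integrable_const 1) (hWmeas i).aestronglyMeasurable
      (ae_of_all _ fun x => by
        rw [Real.norm_eq_abs, abs_of_nonneg (hWnn x i)]; exact hW1 x i)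
  have hpW0 : ∀ i, 0 ≤ pW i := fun i => integral_nonneg fun x => hWnn x i
  have hpWle : ∀ i, pW i ≤ s i := by
    intro i
    calc pW i ≤ ∫ _x, s i ∂p :=
          integral_mono (hWint i) (integrable_const _) fun x => hsle x i
      _ = s i := by simp
  -- HasSum pW 1 via lintegral
  have hmeas' : ∀ i, Measurable fun x => ENNReal.ofReal (W x i) := fun i =>
    ENNReal.measurable_ofReal.comp (hWmeas i)
  have hlint : ∀ x, (∑' i, ENNReal.ofReal (W x i)) = 1 := fun x => by
    rw [← ENNReal.ofReal_tsum_of_nonneg (hWnn x) (hWsummable x), (hWsum x).tsum_eq]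
    simp
  have hswap : (∑' i, ∫⁻ x, ENNReal.ofReal (W x i) ∂p) = 1 := by
    rw [← MeasureTheory.lintegral_tsum fun i => (hmeas' i).aemeasurable]
    rw [lintegral_congr fun x => hlint x]
    simp
  have hpWlint : ∀ i, pW i = (∫⁻ x, ENNReal.ofReal (W x i) ∂p).toReal := fun i =>
    integral_eq_lintegral_of_nonneg_ae (ae_of_all _ fun x => hWnn x i)
      (hWmeas i).aestronglyMeasurable
  have hsummable_toReal : Summable fun i => (∫⁻ x, ENNReal.ofReal (W x i) ∂p).toReal :=
    ENNReal.summable_toReal (by rw [hswap]; exact ENNReal.one_ne_top)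
  have hfin : ∀ i, (∫⁻ x, ENNReal.ofReal (W x i) ∂p) ≠ ⊤ := by
    intro i
    refine ne_of_lt (lt_of_le_of_lt ?_ ENNReal.one_lt_top)
    calc (∫⁻ x, ENNReal.ofReal (W x i) ∂p) ≤ ∫⁻ _x, 1 ∂p :=
          lintegral_mono fun x => ENNReal.ofReal_le_one.mpr (hW1 x i)
      _ = 1 := by simp
  have hpWsummable : Summable pW :=
    hsummable_toReal.congr fun i => (hpWlint i).symm
  have htsumpW : ∑' i, pW i = 1 := by
    calc ∑' i, pW i = ∑' i, (∫⁻ x, ENNReal.ofReal (W x i) ∂p).toReal :=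
          tsum_congr fun i => hpWlint i
      _ = (∑' i, ∫⁻ x, ENNReal.ofReal (W x i) ∂p).toReal :=
          (ENNReal.tsum_toReal_eq hfin).symm
      _ = 1 := by rw [hswap]; simp
  have hpWsum1 : HasSum pW 1 := htsumpW ▸ hpWsummable.hasSum
  have hpWk : Summable fun i => pW i ^ k :=
    Summable.of_nonneg_of_le (fun i => Real.rpow_nonneg (hpW0 i) k)
      (fun i => Real.rpow_le_rpow (hpW0 i) (hpWle i) hk0.le) hsk
  -- truncation commutes with integration
  have htruncint : (fun i => ∫ x, truncChannel W M x i ∂p) =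
      fun i => if i < M then pW i + 1 / (M:ℝ) * ∑' j, (if M ≤ j then pW j else 0)
        else 0 := by
    funext i
    by_cases hi : i < M
    · rw [if_pos hi]
      have hptail : (∑' j, if M ≤ j then pW j else 0) =
          1 - ∑ j ∈ Finset.range M, pW j := tail_eq hpWsum1 M
      have hintsum : Integrable (fun x => ∑ j ∈ Finset.range M, W x j) p :=
        MeasureTheory.integrable_finset_sum _ fun j _ => hWint j
      calc ∫ x, truncChannel W M x i ∂p
          = ∫ x, (W x i + 1 / (M:ℝ) * (1 - ∑ j ∈ Finset.range M, W x j)) ∂p := by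
            apply integral_congr_ae (ae_of_all _ fun x => ?_)
            rw [truncChannel, if_pos hi, htail_fin x]
        _ = pW i + 1 / (M:ℝ) * (1 - ∑ j ∈ Finset.range M, pW j) := by
            have hint3 : Integrable (fun x => (1:ℝ) - ∑ j ∈ Finset.range M, W x j) p :=
              (integrable_const 1).sub hintsum
            rw [integral_add (hWint i) (hint3.const_mul (1 / (M:ℝ)))]
            congr 1
            rw [integral_const_mul]
            congr 1
            rw [integral_sub (integrable_const 1) hintsum]
            rw [MeasureTheory.integral_finset_sum _ fun j _ => hWint j]
            simp; rfl
        _ = pW i + 1 / (M:ℝ) * ∑' j, (if M ≤ j then pW j else 0) := by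
            rw [hptail]
    · rw [if_neg hi]
      have : (fun x => truncChannel W M x i) = fun _x => (0:ℝ) := by
        funext x; rw [truncChannel, if_neg hi]
      rw [this, integral_zero]
  -- output entropy bound
  have houtbound : |pmfEntropy2 pW -
      pmfEntropy2 (fun i => ∫ x, truncChannel W M x i ∂p)| ≤ Bd := by
    rw [htruncint, pmfEntropy2_ite, pmfEntropy2_eq]
    have hb := entropy_trunc_bound pW hpW0 hpWsum1 hk0 hk1 M hM hpWk
    refine hb.trans ?_
    rw [← hc, hBd]
    apply mul_le_mul_of_nonneg_left _ (by positivity)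
    have hTp0 : 0 ≤ ∑' j, if M ≤ j then pW j else 0 :=
      tsum_nonneg fun i => by by_cases h : M ≤ i <;> simp [h, hpW0 i]
    have hTp_le : (∑' j, if M ≤ j then pW j else 0) ≤ S1 := by
      rw [hS1]
      exact Summable.tsum_le_tsum (fun i => by by_cases h : M ≤ i <;> simp [h, hpWle i])
        (summable_tail hpWsummable M) hsum_tail_s
    have h1 : (∑' j, if M ≤ j then pW j else 0) ^ k ≤ S1 ^ k :=
      Real.rpow_le_rpow hTp0 hTp_le hk0.le
    have hQp_le : (∑' i, if M ≤ i then pW i ^ k else 0) ≤ Rk := by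
      rw [hRkdef]
      exact Summable.tsum_le_tsum
        (fun i => by
          by_cases h : M ≤ i <;>
            simp [h, Real.rpow_le_rpow (hpW0 i) (hpWle i) hk0.le])
        (summable_tail hpWk M) (htail M)
    exact add_le_add (mul_le_mul_of_nonneg_left h1 hMk0) hQp_le
  -- conditional entropy integral bound
  have hcond : |(∫ x, pmfEntropy2 (W x) ∂p) -
      ∫ x, pmfEntropy2 (truncChannel W M x) ∂p| ≤ Bd := by
    rw [← integral_sub hint1 hint2]
    calc |∫ x, (pmfEntropy2 (W x) - pmfEntropy2 (truncChannel W M x)) ∂p|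
        ≤ ∫ x, |pmfEntropy2 (W x) - pmfEntropy2 (truncChannel W M x)| ∂p := by
          rw [← Real.norm_eq_abs]
          refine (norm_integral_le_integral_norm _).trans (le_of_eq ?_)
          simp [Real.norm_eq_abs]
      _ ≤ ∫ _x, Bd ∂p :=
          integral_mono (hint1.sub hint2).abs (integrable_const _) fun x => hxbound x
      _ = Bd := by simp
  -- final assembly
  rw [mutualInfoCtble, mutualInfoCtble]
  have hBdnn : 0 ≤ Bd := by
    rw [hBd]
    have : 0 ≤ S1 ^ k := Real.rpow_nonneg hS1_0 k
    positivity
  have hfinal : |pmfEntropy2 (fun i => ∫ x, W x i ∂p) - (∫ x, pmfEntropy2 (W x) ∂p) -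
      (pmfEntropy2 (fun i => ∫ x, truncChannel W M x i ∂p) -
        ∫ x, pmfEntropy2 (truncChannel W M x) ∂p)| ≤ Bd + Bd := by
    have heq : pmfEntropy2 (fun i => ∫ x, W x i ∂p) - (∫ x, pmfEntropy2 (W x) ∂p) -
        (pmfEntropy2 (fun i => ∫ x, truncChannel W M x i ∂p) -
          ∫ x, pmfEntropy2 (truncChannel W M x) ∂p) =
        (pmfEntropy2 pW - pmfEntropy2 (fun i => ∫ x, truncChannel W M x i ∂p)) -
        ((∫ x, pmfEntropy2 (W x) ∂p) - ∫ x, pmfEntropy2 (truncChannel W M x) ∂p) := by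
      rw [hpWdef]; ring
    rw [heq]
    exact (abs_sub _ _).trans (add_le_add houtbound hcond)
  refine hfinal.trans (le_of_eq ?_)
  rw [hBd, hS1tail]
  ring
end

section
/- For every k ∈ (0,1), every p ∈ [0,1], and every x ∈ [0, 1−p], | (p+x)·log(p+x) − p·log p | ≤ (log e)/(e·(1−k)) · x^k. -/
open Real

-- C: -(u log u) ≤ e⁻¹ for u ≥ 0
lemma lemC {u : ℝ} (hu : 0 ≤ u) : -(u * Real.log u) ≤ (Real.exp 1)⁻¹ := by
  rcases eq_or_lt_of_le hu with h | h
  · simp [← h]; positivity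
  · have he : 0 < Real.exp 1 := Real.exp_pos 1
    have h1 : 0 < (Real.exp 1 * u)⁻¹ := by positivity
    have h2 := Real.log_le_sub_one_of_pos h1
    rw [Real.log_inv, Real.log_mul he.ne' h.ne', Real.log_exp] at h2
    -- h2 : -(1 + log u) ≤ (exp 1 * u)⁻¹ - 1, so -log u ≤ (exp 1 * u)⁻¹
    have h3 : -Real.log u ≤ (Real.exp 1 * u)⁻¹ := by linarith
    calc -(u * Real.log u) = u * (-Real.log u) := by ring
    _ ≤ u * (Real.exp 1 * u)⁻¹ := by
        exact mul_le_mul_of_nonneg_left h3 hu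
    _ = (Real.exp 1)⁻¹ := by field_simp

-- A: superadditivity
lemma lemA {p x : ℝ} (hp : 0 ≤ p) (hx : 0 ≤ x) :
    p * Real.log p + x * Real.log x ≤ (p + x) * Real.log (p + x) := by
  rcases eq_or_lt_of_le hp with hp0 | hp0
  · simp [← hp0]
  rcases eq_or_lt_of_le hx with hx0 | hx0
  · simp [← hx0]
  have h1 : Real.log p ≤ Real.log (p + x) := Real.log_le_log hp0 (by linarith)
  have h2 : Real.log x ≤ Real.log (p + x) := Real.log_le_log hx0 (by linarith)
  nlinarith

-- B: upper via convexity
lemma lemB {p x : ℝ} (hp : 0 ≤ p) (hx : 0 ≤ x) (hpx : p + x ≤ 1) :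
    (p + x) * Real.log (p + x) - p * Real.log p ≤ -((1 - x) * Real.log (1 - x)) := by
  rcases eq_or_lt_of_le (show p ≤ 1 by linarith) with h1 | h1
  · have hx0 : x = 0 := by linarith
    simp [hx0, h1]
  · set l : ℝ := x / (1 - p) with hl
    have h1p : 0 < 1 - p := by linarith
    have hl0 : 0 ≤ l := div_nonneg hx (le_of_lt h1p)
    have hl1 : l ≤ 1 := by rw [hl, div_le_one h1p]; linarith
    have key := Real.convexOn_mul_log.2 (Set.mem_Ici.mpr hp) (Set.mem_Ici.mpr zero_le_one)
    have e1 : (1 - l) • p + l • (1 : ℝ) = p + x := by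
      simp only [smul_eq_mul, mul_one]
      field_simp [hl]
      rw [hl]; linear_combination (div_mul_cancel₀ x h1p.ne')
    have e2 : l • p + (1 - l) • (1 : ℝ) = 1 - x := by
      simp only [smul_eq_mul, mul_one]
      field_simp [hl]
      rw [hl]; linear_combination -(div_mul_cancel₀ x h1p.ne')
    have hA := key (a := 1 - l) (b := l) (by linarith) hl0 (by ring)
    have hB := key (a := l) (b := 1 - l) hl0 (by linarith) (by ring)
    rw [e1] at hA
    rw [e2] at hB
    simp only [smul_eq_mul, Real.log_one, mul_zero, one_mul, mul_one, add_zero] at hA hB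
    nlinarith

-- D: -x log x ≤ x^k / (e (1-k)) for x > 0
lemma lemD {k x : ℝ} (hk0 : 0 < k) (hk1 : k < 1) (hx : 0 < x) :
    -(x * Real.log x) ≤ x ^ k / (Real.exp 1 * (1 - k)) := by
  have hu : (0:ℝ) < x ^ (1 - k) := Real.rpow_pos_of_pos hx _
  have hC := lemC hu.le
  rw [Real.log_rpow hx] at hC
  have hxk : (0:ℝ) ≤ x ^ k := (Real.rpow_pos_of_pos hx _).le
  have hsplit : x = x ^ k * x ^ (1 - k) := by
    rw [← Real.rpow_add hx]; norm_num
  have he : 0 < Real.exp 1 := Real.exp_pos 1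
  have h1k : 0 < 1 - k := by linarith
  have key : x ^ (1 - k) * (-Real.log x) ≤ (Real.exp 1 * (1 - k))⁻¹ := by
    rw [inv_eq_one_div, le_div_iff₀ (by positivity)]
    have h2 := mul_le_mul_of_nonneg_right hC (Real.exp_pos 1).le
    have h3 : (Real.exp 1)⁻¹ * Real.exp 1 = 1 := inv_mul_cancel₀ he.ne'
    nlinarith [h2, h3]
  calc -(x * Real.log x) = x ^ k * (x ^ (1 - k) * (-Real.log x)) := by
        nth_rewrite 1 [hsplit]; ring
  _ ≤ x ^ k * (Real.exp 1 * (1 - k))⁻¹ := mul_le_mul_of_nonneg_left key hxk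
  _ = x ^ k / (Real.exp 1 * (1 - k)) := by rw [div_eq_mul_inv]

-- E: -(1-x) log(1-x) ≤ x^k / (e (1-k)) for 0 ≤ x ≤ 1
lemma lemE {k x : ℝ} (hk0 : 0 < k) (hk1 : k < 1) (hx0 : 0 ≤ x) (hx1 : x ≤ 1) :
    -((1 - x) * Real.log (1 - x)) ≤ x ^ k / (Real.exp 1 * (1 - k)) := by
  rcases eq_or_lt_of_le hx0 with h0 | h0
  · simp [← h0, Real.zero_rpow hk0.ne']
  have he : 0 < Real.exp 1 := Real.exp_pos 1
  have h1k : 0 < 1 - k := by linarith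
  have hE : 0 < Real.exp 1 * (1 - k) := by positivity
  rcases le_or_gt (Real.exp 1)⁻¹ x with hcase | hcase
  · -- x ≥ 1/e : LHS ≤ e⁻¹ ≤ RHS
    have hL : -((1 - x) * Real.log (1 - x)) ≤ (Real.exp 1)⁻¹ := lemC (by linarith)
    refine hL.trans ?_
    rw [le_div_iff₀ hE]
    -- need e⁻¹ * (e * (1-k)) = 1 - k ≤ x^k
    have h1 : (1:ℝ) - k ≤ x ^ k := by
      have h2 : Real.exp (-1) ^ (k:ℝ) ≤ x ^ k := by
        apply Real.rpow_le_rpow (Real.exp_pos _).le _ hk0.le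
        rwa [Real.exp_neg]
      rw [← Real.exp_mul] at h2
      have h3 : (1:ℝ) - k ≤ Real.exp (-1 * k) := by
        have := Real.add_one_le_exp (-k)
        calc (1:ℝ) - k = -k + 1 := by ring
        _ ≤ Real.exp (-k) := this
        _ = Real.exp (-1 * k) := by ring_nf
      linarith
    have : (Real.exp 1)⁻¹ * (Real.exp 1 * (1 - k)) = 1 - k := by
      field_simp
    linarith
  · -- x < 1/e : LHS ≤ x ≤ RHS
    have hx1' : x < 1 := by
      have he1 : (1:ℝ) < Real.exp 1 := by nlinarith [Real.add_one_le_exp 1]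
      have hinv : (Real.exp 1)⁻¹ * Real.exp 1 = 1 := inv_mul_cancel₀ he.ne'
      nlinarith [hcase, inv_pos.mpr he]
    have hL : -((1 - x) * Real.log (1 - x)) ≤ x := by
      have h1x : 0 < 1 - x := by linarith
      have h2 := Real.log_le_sub_one_of_pos (show 0 < (1-x)⁻¹ by positivity)
      rw [Real.log_inv] at h2
      have h3 : (1 - x)⁻¹ - 1 = x / (1 - x) := by field_simp; ring
      rw [h3] at h2
      have h4 := mul_le_mul_of_nonneg_left h2 h1x.le
      calc -((1 - x) * Real.log (1 - x)) = (1 - x) * (-Real.log (1 - x)) := by ring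
      _ ≤ (1 - x) * (x / (1 - x)) := h4
      _ = x := by field_simp
    refine hL.trans ?_
    -- x ≤ x^k / (e(1-k)):  x^(1-k) ≤ exp(-(1-k)) ≤ (e(1-k))⁻¹
    have hlogx : Real.log x ≤ -1 := by
      have := Real.log_le_log h0 hcase.le
      rwa [Real.log_inv, Real.log_exp] at this
    have hxk : (0:ℝ) ≤ x ^ k := (Real.rpow_pos_of_pos h0 _).le
    have h5 : x ^ (1 - k) ≤ Real.exp (-(1 - k)) := by
      rw [Real.rpow_def_of_pos h0]
      apply Real.exp_le_exp.mpr
      nlinarith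
    have h6 : Real.exp (-(1 - k)) ≤ (Real.exp 1 * (1 - k))⁻¹ := by
      rw [inv_eq_one_div, le_div_iff₀ hE]
      have hek : Real.exp (-(1 - k)) * Real.exp 1 = Real.exp k := by
        rw [← Real.exp_add]; ring_nf
      have h7 : 1 - k ≤ Real.exp (-k) := by linarith [Real.add_one_le_exp (-k)]
      have h8 : Real.exp (-k) * Real.exp k = 1 := by
        rw [← Real.exp_add]; simp
      nlinarith [Real.exp_pos k, Real.exp_pos (-(1-k))]
    have hsplit : x = x ^ k * x ^ (1 - k) := by
      rw [← Real.rpow_add h0]; norm_num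
    calc x = x ^ k * x ^ (1 - k) := hsplit
    _ ≤ x ^ k * (Real.exp 1 * (1 - k))⁻¹ := mul_le_mul_of_nonneg_left (h5.trans h6) hxk
    _ = x ^ k / (Real.exp 1 * (1 - k)) := by rw [div_eq_mul_inv]

theorem stmt14 (k p x : ℝ) (hk0 : 0 < k) (hk1 : k < 1)
    (hp0 : 0 ≤ p) (hp1 : p ≤ 1) (hx0 : 0 ≤ x) (hx1 : x ≤ 1 - p) :
    |(p + x) * Real.logb 2 (p + x) - p * Real.logb 2 p| ≤
      Real.logb 2 (Real.exp 1) / (Real.exp 1 * (1 - k)) * x ^ k := by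
  have he : 0 < Real.exp 1 := Real.exp_pos 1
  have h1k : 0 < 1 - k := by linarith
  have hE : 0 < Real.exp 1 * (1 - k) := by positivity
  have hlog2 : 0 < Real.log 2 := Real.log_pos one_lt_two
  -- main inequality in natural log
  have main : |(p + x) * Real.log (p + x) - p * Real.log p| ≤
      x ^ k / (Real.exp 1 * (1 - k)) := by
    rcases eq_or_lt_of_le hx0 with h0 | h0
    · simp [← h0, Real.zero_rpow hk0.ne']
    rw [abs_le]
    constructor
    · have hA := lemA hp0 hx0
      have hD := lemD hk0 hk1 h0
      linarith
    · have hB := lemB hp0 hx0 (by linarith)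
      have hE' := lemE hk0 hk1 hx0 (by linarith)
      linarith
  simp only [Real.logb, Real.log_exp]
  have heq : (p + x) * (Real.log (p + x) / Real.log 2) - p * (Real.log p / Real.log 2)
      = ((p + x) * Real.log (p + x) - p * Real.log p) / Real.log 2 := by ring
  rw [heq, abs_div, abs_of_pos hlog2, div_le_iff₀ hlog2]
  have heq2 : 1 / Real.log 2 / (Real.exp 1 * (1 - k)) * x ^ k * Real.log 2
      = x ^ k / (Real.exp 1 * (1 - k)) := by
    field_simp
  rw [heq2]
  exact main
end

section
/- Let (a_i)_{i≥1} be a nonnegative sequence of real numbers and k ∈ (0,1]. Then ∑_{i≥1} a_i^k ≤ ( ∑_{i≥1} α^i·a_i )^k, where α := 2^{(1/k − 1)} and the inequality is understood in the extended reals [0,∞]. -/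
open scoped ENNReal

open Finset in
theorem stmt16 (a : ℕ → ℝ) (ha : ∀ i, 0 ≤ a i) (k : ℝ) (hk0 : 0 < k) (hk1 : k ≤ 1) :
    ∑' i : ℕ, (ENNReal.ofReal (a (i + 1))) ^ k ≤
      (∑' i : ℕ, ENNReal.ofReal (((2 : ℝ) ^ (1 / k - 1)) ^ (i + 1) * a (i + 1))) ^ k := by
  set α : ℝ := (2 : ℝ) ^ (1 / k - 1) with hα
  have hαpos : 0 < α := Real.rpow_pos_of_pos (by norm_num) _
  set A : ℝ≥0∞ := ENNReal.ofReal α with hA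
  have hA2 : A = (2 : ℝ≥0∞) ^ (1 / k - 1) := by
    rw [hA, hα, ← ENNReal.ofReal_rpow_of_pos (by norm_num)]
    norm_num
  -- binary key inequality
  have key : ∀ x y : ℝ≥0∞, x ^ k + y ^ k ≤ (A * (x + y)) ^ k := by
    intro x y
    have h := ENNReal.rpow_add_le_mul_rpow_add_rpow (x ^ k) (y ^ k)
      (p := 1 / k) (by rw [le_div_iff₀ hk0]; linarith)
    rw [← ENNReal.rpow_mul x, ← ENNReal.rpow_mul y,
      show k * (1 / k) = 1 by field_simp, ENNReal.rpow_one, ENNReal.rpow_one] at h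
    have h2 : ((x ^ k + y ^ k) ^ (1 / k)) ^ k ≤ ((2 : ℝ≥0∞) ^ (1 / k - 1) * (x + y)) ^ k :=
      ENNReal.rpow_le_rpow h hk0.le
    rwa [← hA2, ← ENNReal.rpow_mul, one_div, inv_mul_cancel₀ hk0.ne', ENNReal.rpow_one] at h2
  -- finite-sum induction
  have main : ∀ n : ℕ, ∀ b : ℕ → ℝ≥0∞,
      ∑ i ∈ range n, (b i) ^ k ≤ (∑ i ∈ range n, A ^ (i + 1) * b i) ^ k := by
    intro n
    induction n with
    | zero => intro b; simp [ENNReal.zero_rpow_of_pos hk0]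
    | succ n ih =>
      intro b
      rw [Finset.sum_range_succ' (fun i => (b i) ^ k), Finset.sum_range_succ']
      calc ∑ i ∈ range n, (b (i + 1)) ^ k + (b 0) ^ k
          ≤ (∑ i ∈ range n, A ^ (i + 1) * b (i + 1)) ^ k + (b 0) ^ k := by
            gcongr
            exact ih (fun i => b (i + 1))
        _ ≤ (A * ((b 0) + ∑ i ∈ range n, A ^ (i + 1) * b (i + 1))) ^ k := by
            rw [add_comm]
            exact key _ _
        _ = (∑ i ∈ range n, A ^ (i + 1 + 1) * b (i + 1) + A ^ (0 + 1) * b 0) ^ k := by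
            congr 1
            rw [mul_add, Finset.mul_sum, add_comm]
            congr 1
            · refine Finset.sum_congr rfl fun i _ => ?_
              rw [← mul_assoc, ← pow_succ']
            · rw [pow_one]
  -- rewrite RHS terms
  have hterm : ∀ i : ℕ, ENNReal.ofReal (α ^ (i + 1) * a (i + 1))
      = A ^ (i + 1) * ENNReal.ofReal (a (i + 1)) := by
    intro i
    rw [ENNReal.ofReal_mul (by positivity), ENNReal.ofReal_pow hαpos.le]
  set b : ℕ → ℝ≥0∞ := fun i => ENNReal.ofReal (a (i + 1)) with hb
  have hR : ∑' i : ℕ, ENNReal.ofReal (α ^ (i + 1) * a (i + 1)) = ∑' i : ℕ, A ^ (i + 1) * b i :=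
    tsum_congr hterm
  rw [hR, ENNReal.tsum_eq_iSup_nat]
  refine iSup_le fun n => ?_
  calc ∑ i ∈ range n, (b i) ^ k ≤ (∑ i ∈ range n, A ^ (i + 1) * b i) ^ k := main n b
    _ ≤ (∑' i : ℕ, A ^ (i + 1) * b i) ^ k := by
        gcongr
        exact ENNReal.sum_le_tsum _
end

section
/- Consider the discrete-time Poisson channel W(i|x) := e^{−(x+η)}·(x+η)^i / i! for i ∈ ℕ, with bounded input alphabet 𝕏 = [0,A] (A > 0) and dark-current parameter η ≥ 0. Then for every k ∈ (0,1] and every integer M ≥ A + η, R_k(M) := ∑_{i≥M} ( sup_{x∈[0,A]} W(i|x) )^k ≤ ( α·e^{(α−1)(A+η)}·(A+η)^M / M! )^k, where α := 2^{(1/k − 1)}. In particular, the Poisson channel has a k-ordered polynomial tail (R_k(M) < ∞) for every k ∈ (0,1]. -/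
open Real Finset

lemma aux_exp_pow_mono {i : ℕ} (hi : 1 ≤ i) {s u : ℝ} (hs : 0 ≤ s) (hsu : s ≤ u)
    (hui : u ≤ (i : ℝ)) : Real.exp (-s) * s ^ i ≤ Real.exp (-u) * u ^ i := by
  rcases eq_or_lt_of_le hs with rfl | hs0
  · rw [zero_pow (by omega), mul_zero]
    positivity
  · have hu0 : 0 < u := lt_of_lt_of_le hs0 hsu
    set r : ℝ := s / u with hr
    have hr0 : 0 ≤ r := by positivity
    have hr1 : r ≤ 1 := by rw [hr, div_le_one hu0]; exact hsu
    have hsur : s = u * r := by rw [hr]; field_simp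
    have h1 : r ≤ Real.exp (r - 1) := by
      have := Real.add_one_le_exp (r - 1); linarith
    have h2 : r ^ i ≤ Real.exp (r - 1) ^ i := pow_le_pow_left₀ hr0 h1 i
    have h3 : Real.exp (r - 1) ^ i = Real.exp ((r - 1) * i) := by
      rw [← Real.exp_nat_mul]; ring_nf
    have h4 : (r - 1) * i ≤ s - u := by
      have hr1' : r - 1 ≤ 0 := by linarith
      nlinarith [mul_le_mul_of_nonpos_left hui hr1']
    have h5 : r ^ i ≤ Real.exp (s - u) := by
      calc r ^ i ≤ Real.exp ((r - 1) * i) := by rw [← h3]; exact h2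
        _ ≤ Real.exp (s - u) := Real.exp_le_exp.2 h4
    calc Real.exp (-s) * s ^ i = Real.exp (-s) * (u ^ i * r ^ i) := by
          rw [hsur, mul_pow]
      _ ≤ Real.exp (-s) * (u ^ i * Real.exp (s - u)) := by
          have h6 : (0:ℝ) < u ^ i := by positivity
          have h7 := Real.exp_pos (-s)
          gcongr
      _ = Real.exp (-u) * u ^ i := by
          rw [show Real.exp (-s) * (u ^ i * Real.exp (s - u))
              = u ^ i * (Real.exp (-s) * Real.exp (s - u)) by ring, ← Real.exp_add]
          ring_nf

lemma aux_holder2 (v : Finset ℕ) (f g : ℕ → ℝ) (hf : ∀ i, 0 ≤ f i) (hg : ∀ i, 0 ≤ g i)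
    {k : ℝ} (hk0 : 0 < k) (hk1 : k ≤ 1) :
    ∑ i ∈ v, f i ^ k * g i ^ (1 - k) ≤ (∑ i ∈ v, f i) ^ k * (∑ i ∈ v, g i) ^ (1 - k) := by
  rcases eq_or_lt_of_le hk1 with rfl | hk1'
  · simp
  · have hpq : (1 / k).HolderConjugate (1 / (1 - k)) := by
      rw [Real.holderConjugate_iff]
      constructor
      · rw [lt_div_iff₀ hk0, one_mul]; exact hk1'
      · rw [one_div, one_div, inv_inv, inv_inv]; ring
    have H := Real.inner_le_Lp_mul_Lq_of_nonneg (s := v) hpq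
      (f := fun i => f i ^ k) (g := fun i => g i ^ (1 - k))
      (fun i _ => Real.rpow_nonneg (hf i) k) (fun i _ => Real.rpow_nonneg (hg i) (1 - k))
    have e1 : ∀ i, ((f i ^ k) ^ (1 / k) : ℝ) = f i := fun i => by
      rw [← Real.rpow_mul (hf i), mul_one_div_cancel hk0.ne', Real.rpow_one]
    have e2 : ∀ i, ((g i ^ (1 - k)) ^ (1 / (1 - k)) : ℝ) = g i := fun i => by
      rw [← Real.rpow_mul (hg i), mul_one_div_cancel (by linarith : (1:ℝ) - k ≠ 0),
        Real.rpow_one]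
    simp only [e1, e2, one_div_one_div] at H
    exact H

theorem stmt17 (A η : ℝ) (hA : 0 < A) (hη : 0 ≤ η)
    (W : ℝ → ℕ → ℝ)
    (hW : ∀ x i, W x i = Real.exp (-(x + η)) * (x + η) ^ i / (Nat.factorial i : ℝ))
    (k : ℝ) (hk0 : 0 < k) (hk1 : k ≤ 1)
    (M : ℕ) (hM : A + η ≤ M) :
    Summable (fun i : ℕ => if M ≤ i then (⨆ x : Set.Icc (0 : ℝ) A, W x.1 i) ^ k else 0) ∧
      (∑' i : ℕ, if M ≤ i then (⨆ x : Set.Icc (0 : ℝ) A, W x.1 i) ^ k else 0) ≤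
        ((2 : ℝ) ^ (1 / k - 1) *
            Real.exp (((2 : ℝ) ^ (1 / k - 1) - 1) * (A + η)) *
            (A + η) ^ M / (Nat.factorial M : ℝ)) ^ k := by
  classical
  have hfact : ∀ n : ℕ, (0:ℝ) < (Nat.factorial n : ℝ) :=
    fun n => by exact_mod_cast Nat.factorial_pos n
  set t := A + η with htdef
  have ht0 : 0 < t := by positivity
  have hM1 : 1 ≤ M := by
    rcases Nat.eq_zero_or_pos M with h0 | h; · rw [h0] at hM; simp at hM; linarith
    exact h
  set α := (2:ℝ) ^ (1/k - 1) with hαdef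
  have hkinv : 0 ≤ 1/k - 1 := by
    rw [le_sub_iff_add_le, zero_add, le_div_iff₀ hk0, one_mul]; exact hk1
  have hα1 : 1 ≤ α := Real.one_le_rpow one_le_two hkinv
  have hα0 : 0 < α := lt_of_lt_of_le zero_lt_one hα1
  set C := α * Real.exp ((α - 1) * t) * t ^ M / (Nat.factorial M : ℝ) with hCdef
  -- the sup computation
  have hsup : ∀ i : ℕ, M ≤ i →
      (⨆ x : Set.Icc (0:ℝ) A, W x.1 i) = Real.exp (-t) * t ^ i / (Nat.factorial i : ℝ) := by
    intro i hi
    haveI : Nonempty (Set.Icc (0:ℝ) A) := ⟨⟨A, Set.mem_Icc.2 ⟨hA.le, le_refl A⟩⟩⟩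
    have hWA : W A i = Real.exp (-t) * t ^ i / (Nat.factorial i : ℝ) := by
      rw [hW, htdef]
    have key : ∀ x : Set.Icc (0:ℝ) A, W x.1 i ≤ W A i := by
      intro x
      rw [hW, hW]
      have hx0 : (0:ℝ) ≤ x.1 := x.2.1
      have hxA : x.1 ≤ A := x.2.2
      have hi1 : 1 ≤ i := le_trans hM1 hi
      have hmono := aux_exp_pow_mono hi1 (s := x.1 + η) (u := A + η)
        (by linarith) (by linarith)
        (le_trans hM (by exact_mod_cast hi))
      rw [div_eq_mul_inv, div_eq_mul_inv]
      exact mul_le_mul_of_nonneg_right hmono (by positivity)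
    apply le_antisymm
    · exact ciSup_le fun x => (key x).trans_eq hWA
    · rw [← hWA]
      exact le_ciSup ⟨W A i, by rintro _ ⟨x, rfl⟩; exact key x⟩
        (⟨A, Set.mem_Icc.2 ⟨hA.le, le_refl A⟩⟩ : Set.Icc (0:ℝ) A)
  set h : ℕ → ℝ :=
    fun i => if M ≤ i then (Real.exp (-t) * t ^ i / (Nat.factorial i : ℝ)) ^ k else 0 with hhdef
  have hfe : (fun i : ℕ => if M ≤ i then (⨆ x : Set.Icc (0:ℝ) A, W x.1 i) ^ k else 0) = h := by
    funext i
    by_cases hi : M ≤ i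
    · simp only [hhdef, if_pos hi, hsup i hi]
    · simp only [hhdef, if_neg hi]
  have hh0 : ∀ i, 0 ≤ h i := by
    intro i
    rw [hhdef]
    dsimp only
    split
    · positivity
    · exact le_refl 0
  -- auxiliary functions for Hölder
  set f : ℕ → ℝ :=
    fun i => Real.exp (-t) * t ^ i * α ^ (i - M) / (Nat.factorial i : ℝ) with hfdef
  set g : ℕ → ℝ := fun i => ((2:ℝ)⁻¹) ^ (i - M) with hgdef
  have hf0 : ∀ i, 0 ≤ f i := fun i => by rw [hfdef]; dsimp only; positivity
  have hg0 : ∀ i, 0 ≤ g i := fun i => by rw [hgdef]; dsimp only; positivity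
  -- the key finite-sum bound
  have key : ∀ u : Finset ℕ, ∑ i ∈ u, h i ≤ C ^ k := by
    intro u
    have hsum_eq : ∑ i ∈ u, h i
        = ∑ i ∈ u.filter (fun i => M ≤ i),
            (Real.exp (-t) * t ^ i / (Nat.factorial i : ℝ)) ^ k := by
      rw [Finset.sum_filter]
    rw [hsum_eq]
    set v := u.filter (fun i => M ≤ i) with hvdef
    have hv : ∀ i ∈ v, M ≤ i := fun i hi => (Finset.mem_filter.1 hi).2
    -- termwise factorization
    have hterm : ∀ i ∈ v, (Real.exp (-t) * t ^ i / (Nat.factorial i : ℝ)) ^ k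
        = f i ^ k * g i ^ (1 - k) := by
      intro i _
      have hα_id : ((α ^ (i - M) : ℝ)) ^ k * (((2:ℝ)⁻¹ ^ (i - M) : ℝ)) ^ (1 - k) = 1 := by
        set n : ℕ := i - M with hn
        have a1 : (α : ℝ) ^ n = (2:ℝ) ^ ((1/k - 1) * (n:ℝ)) := by
          rw [Real.rpow_mul (by norm_num : (0:ℝ) ≤ 2), Real.rpow_natCast]
        have a2 : ((2:ℝ)⁻¹) ^ n = (2:ℝ) ^ (-(n:ℝ)) := by
          rw [inv_pow, Real.rpow_neg (by norm_num : (0:ℝ) ≤ 2), Real.rpow_natCast]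
        rw [a1, a2, ← Real.rpow_mul (by norm_num : (0:ℝ) ≤ 2),
          ← Real.rpow_mul (by norm_num : (0:ℝ) ≤ 2),
          ← Real.rpow_add (by norm_num : (0:ℝ) < 2)]
        rw [show (1/k - 1) * (n:ℝ) * k + (-(n:ℝ)) * (1 - k) = 0 by field_simp; ring]
        exact Real.rpow_zero 2
      have hfi : f i = (Real.exp (-t) * t ^ i / (Nat.factorial i : ℝ)) * α ^ (i - M) := by
        rw [hfdef]; dsimp only; ring
      rw [hfi, Real.mul_rpow (by positivity) (by positivity), mul_assoc, hgdef]
      dsimp only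
      rw [hα_id, mul_one]
    rw [Finset.sum_congr rfl hterm]
    -- Hölder
    have H := aux_holder2 v f g hf0 hg0 hk0 hk1
    refine le_trans H ?_
    -- bound on ∑ g
    have hginj : ∀ x ∈ v, ∀ y ∈ v, x - M = y - M → x = y := by
      intro x hx y hy hxy
      have := hv x hx; have := hv y hy; omega
    have hgsum : ∑ i ∈ v, g i ≤ 2 := by
      calc ∑ i ∈ v, g i = ∑ j ∈ v.image (fun i => i - M), ((2:ℝ)⁻¹) ^ j := by
            rw [Finset.sum_image hginj]
        _ ≤ ∑' j : ℕ, ((2:ℝ)⁻¹) ^ j := by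
            refine Summable.sum_le_tsum _ (fun j _ => by positivity) ?_
            exact summable_geometric_of_lt_one (by norm_num) (by norm_num)
        _ = 2 := by
            rw [tsum_geometric_of_lt_one (by norm_num) (by norm_num)]
            norm_num
    -- bound on ∑ f
    have hfsum : ∑ i ∈ v, f i
        ≤ Real.exp (-t) * t ^ M / (Nat.factorial M : ℝ) * Real.exp (t * α) := by
      have step : ∀ i ∈ v, f i
          ≤ Real.exp (-t) * t ^ M / (Nat.factorial M : ℝ)
              * ((t * α) ^ (i - M) / (Nat.factorial (i - M) : ℝ)) := by
        intro i hi
        have hiM := hv i hi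
        have hfac : (Nat.factorial M : ℝ) * (Nat.factorial (i - M) : ℝ)
            ≤ (Nat.factorial i : ℝ) := by
          have hdvd := Nat.factorial_mul_factorial_dvd_factorial_add M (i - M)
          rw [Nat.add_sub_cancel' hiM] at hdvd
          exact_mod_cast Nat.le_of_dvd (Nat.factorial_pos i) hdvd
        have hti : t ^ i = t ^ M * t ^ (i - M) := by
          rw [← pow_add, Nat.add_sub_cancel' hiM]
        have hrhs : Real.exp (-t) * t ^ M / (Nat.factorial M : ℝ)
              * ((t * α) ^ (i - M) / (Nat.factorial (i - M) : ℝ))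
            = Real.exp (-t) * t ^ i * α ^ (i - M)
                / ((Nat.factorial M : ℝ) * (Nat.factorial (i - M) : ℝ)) := by
          rw [hti, mul_pow]; ring
        rw [hfdef]
        dsimp only
        rw [hrhs]
        exact div_le_div_of_nonneg_left (by positivity) (by positivity) hfac
      calc ∑ i ∈ v, f i
          ≤ ∑ i ∈ v, Real.exp (-t) * t ^ M / (Nat.factorial M : ℝ)
              * ((t * α) ^ (i - M) / (Nat.factorial (i - M) : ℝ)) :=
            Finset.sum_le_sum step
        _ = Real.exp (-t) * t ^ M / (Nat.factorial M : ℝ)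
              * ∑ i ∈ v, (t * α) ^ (i - M) / (Nat.factorial (i - M) : ℝ) := by
            rw [Finset.mul_sum]
        _ ≤ Real.exp (-t) * t ^ M / (Nat.factorial M : ℝ) * Real.exp (t * α) := by
            refine mul_le_mul_of_nonneg_left ?_ (by positivity)
            calc ∑ i ∈ v, (t * α) ^ (i - M) / (Nat.factorial (i - M) : ℝ)
                = ∑ j ∈ v.image (fun i => i - M),
                    (t * α) ^ j / (Nat.factorial j : ℝ) := by
                  rw [Finset.sum_image hginj]
              _ ≤ Real.exp (t * α) := by
                  obtain ⟨N, hN⟩ := Finset.exists_nat_subset_range (v.image (fun i => i - M))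
                  calc ∑ j ∈ v.image (fun i => i - M), (t * α) ^ j / (Nat.factorial j : ℝ)
                      ≤ ∑ j ∈ Finset.range N, (t * α) ^ j / (Nat.factorial j : ℝ) :=
                        Finset.sum_le_sum_of_subset_of_nonneg hN
                          (fun j _ _ => by positivity)
                    _ ≤ Real.exp (t * α) := Real.sum_le_exp_of_nonneg (by positivity) N
    -- combine
    have hC : (Real.exp (-t) * t ^ M / (Nat.factorial M : ℝ) * Real.exp (t * α)) ^ k
        * (2:ℝ) ^ ((1:ℝ) - k) = C ^ k := by
      have hbase : Real.exp (-t) * t ^ M / (Nat.factorial M : ℝ) * Real.exp (t * α)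
          = Real.exp ((α - 1) * t) * t ^ M / (Nat.factorial M : ℝ) := by
        rw [show Real.exp (-t) * t ^ M / (Nat.factorial M : ℝ) * Real.exp (t * α)
            = Real.exp (-t) * Real.exp (t * α) * t ^ M / (Nat.factorial M : ℝ) by ring,
          ← Real.exp_add]
        ring_nf
      have h2k : (2:ℝ) ^ ((1:ℝ) - k) = α ^ k := by
        rw [hαdef, ← Real.rpow_mul (by norm_num : (0:ℝ) ≤ 2)]
        congr 1
        field_simp
      rw [hbase, h2k, ← Real.mul_rpow (by positivity) (by positivity), hCdef]
      congr 1
      ring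
    rw [← hC]
    have hE : (0:ℝ) ≤ Real.exp (-t) * t ^ M / (Nat.factorial M : ℝ) * Real.exp (t * α) := by
      positivity
    refine mul_le_mul ?_ ?_ (by positivity) (by positivity)
    · exact Real.rpow_le_rpow (Finset.sum_nonneg fun i _ => hf0 i) hfsum hk0.le
    · exact Real.rpow_le_rpow (Finset.sum_nonneg fun i _ => hg0 i) hgsum (by linarith)
  rw [hfe]
  have hsummable : Summable h := summable_of_sum_le hh0 key
  exact ⟨hsummable, Summable.tsum_le_of_sum_le hsummable key⟩
end
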